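/- arXiv:2306.14524 — 4 statements merged into one kernel-verified Lean document; each statement's English description precedes it below -/
import Mathlib

section
/- Let f : ℝ → ℝ be continuous and 2π-periodic with f(0) = 1 and f(ξ)² + f(ξ+π)² ≤ 1 for all ξ ∈ ℝ, and let ε > 0. Then there exists a continuous 2π-periodic function g : ℝ → ℝ such that: (i) g(0) = 1; (ii) sup_{ξ ∈ ℝ} |f(ξ) − g(ξ)| < ε; (iii) g(ξ)² + g(ξ+π)² ≤ 1 for all ξ ∈ ℝ; (iv) g has only finitely many zeros in [0, 2π); (v) g has no pair of symmetric roots; and (vi) g has no nontrivial cycle. -/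
open scoped BigOperators

/-- `b : Fin n → ℂ` is a cycle of the `2π`-periodic function `g`: the `b j` are distinct
unimodular complex numbers, `b (j+1) = (b j)^2` cyclically (so `b (n-1) ^ 2 = b 0`), and
writing `b j = e^{iβ_j}` we have `g (β_j + π) = 0`. -/
def IsCycleOf (g : ℝ → ℝ) {n : ℕ} (b : Fin n → ℂ) : Prop :=
  0 < n ∧ Function.Injective b ∧ (∀ j, ‖b j‖ = 1) ∧
    (∀ (j : ℕ) (hj : j < n),
      b ⟨(j + 1) % n, Nat.mod_lt _ (Nat.zero_lt_of_lt hj)⟩ = b ⟨j, hj⟩ ^ 2) ∧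
    ∀ j : Fin n, ∃ β : ℝ, b j = Complex.exp (β * Complex.I) ∧ g (β + Real.pi) = 0

/-- `g` has a nontrivial cycle, i.e. a cycle different from `{1}`. -/
def HasNontrivialCycle (g : ℝ → ℝ) : Prop :=
  ∃ (n : ℕ) (b : Fin n → ℂ), IsCycleOf g b ∧ Set.range b ≠ {1}

namespace Step1Aux

open Real

noncomputable def del (M : ℕ) : ℝ := Real.pi / M

noncomputable def mu (M : ℕ) : ℝ := Real.sqrt 2 / ((8 * M : ℕ) : ℝ)

noncomputable def th (M : ℕ) (k : ℤ) : ℝ := 1 / 2 + ((k % (2 * (M : ℤ)) + 1 : ℤ) : ℝ) * mu M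

noncomputable def ypt (M : ℕ) (k : ℤ) : ℝ := ((k : ℝ) + th M k) * del M

noncomputable def sgn (x : ℝ) : ℝ := if x < 0 then -1 else 1

noncomputable def psh (τ x : ℝ) : ℝ := if x < 0 then min x (-τ) else max x τ

noncomputable def Av (f : ℝ → ℝ) (M : ℕ) (τ : ℝ) (k : ℤ) : ℝ :=
  if k % (2 * (M : ℤ)) = (M : ℤ) then 0 else psh τ (f (k * del M))

noncomputable def Bv (f : ℝ → ℝ) (M : ℕ) (τ : ℝ) (k : ℤ) : ℝ :=
  if k % (2 * (M : ℤ)) = (M : ℤ) - 1 then τ * sgn (f (k * del M))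
  else if k % (2 * (M : ℤ)) = (M : ℤ) then τ * sgn (f ((k + 1) * del M))
  else if sgn (f (k * del M)) = sgn (f ((k + 1) * del M)) then
    sgn (f (k * del M)) * max (sgn (f (k * del M)) * f (ypt M k)) τ
  else 0

noncomputable def piece (f : ℝ → ℝ) (M : ℕ) (τ : ℝ) (k : ℤ) (ξ : ℝ) : ℝ :=
  if ξ / del M - k ≤ th M k then
    Av f M τ k + ((ξ / del M - k) / th M k) * (Bv f M τ k - Av f M τ k)
  else
    Bv f M τ k + ((ξ / del M - k - th M k) / (1 - th M k)) * (Av f M τ (k + 1) - Bv f M τ k)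

noncomputable def rfun (f : ℝ → ℝ) (M : ℕ) (τ : ℝ) (ξ : ℝ) : ℝ := piece f M τ ⌊ξ / del M⌋ ξ


lemma Mpos {M : ℕ} (hM : 2 ≤ M) : (0 : ℝ) < M := by
  have : (0 : ℕ) < M := by omega
  exact_mod_cast this

lemma del_pos {M : ℕ} (hM : 2 ≤ M) : 0 < del M := div_pos Real.pi_pos (Mpos hM)

lemma mu_pos {M : ℕ} (hM : 2 ≤ M) : 0 < mu M := by
  have h8 : (0 : ℝ) < ((8 * M : ℕ) : ℝ) := by
    have : (0 : ℕ) < 8 * M := by omega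
    exact_mod_cast this
  exact div_pos (Real.sqrt_pos.2 (by norm_num)) h8

lemma mu_irr {M : ℕ} (hM : 2 ≤ M) : Irrational (mu M) :=
  irrational_sqrt_two.div_natCast (by omega)

lemma sqrt_two_lt_two : Real.sqrt 2 < 2 := by
  nlinarith [Real.sq_sqrt (by norm_num : (0:ℝ) ≤ 2), Real.sqrt_nonneg 2]

lemma th_bounds {M : ℕ} (hM : 2 ≤ M) (k : ℤ) : 1 / 2 < th M k ∧ th M k < 1 := by
  have e0 : 0 ≤ k % (2 * (M : ℤ)) := Int.emod_nonneg k (by omega)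
  have e1 : k % (2 * (M : ℤ)) < 2 * (M : ℤ) := Int.emod_lt_of_pos k (by omega)
  have h1 : (1 : ℝ) ≤ ((k % (2 * (M : ℤ)) + 1 : ℤ) : ℝ) := by
    have : (1 : ℤ) ≤ k % (2 * (M : ℤ)) + 1 := by omega
    exact_mod_cast this
  have h2 : ((k % (2 * (M : ℤ)) + 1 : ℤ) : ℝ) ≤ 2 * (M : ℝ) := by
    have : (k % (2 * (M : ℤ)) + 1 : ℤ) ≤ 2 * (M : ℤ) := by omega
    exact_mod_cast this
  have hmu := mu_pos hM
  constructor
  · have : 0 < ((k % (2 * (M : ℤ)) + 1 : ℤ) : ℝ) * mu M := by nlinarith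
    unfold th; linarith
  · have hb : ((k % (2 * (M : ℤ)) + 1 : ℤ) : ℝ) * mu M ≤ 2 * (M : ℝ) * mu M := by nlinarith
    have h2M : (2 : ℝ) * (M : ℝ) * mu M = Real.sqrt 2 / 4 := by
      unfold mu
      have hMne : ((M : ℝ)) ≠ 0 := ne_of_gt (Mpos hM)
      push_cast
      field_simp
      ring
    have := sqrt_two_lt_two
    unfold th; rw [h2M] at hb; linarith

lemma th_pos {M : ℕ} (hM : 2 ≤ M) (k : ℤ) : 0 < th M k := by linarith [(th_bounds hM k).1]

lemma th_lt_one {M : ℕ} (hM : 2 ≤ M) (k : ℤ) : th M k < 1 := (th_bounds hM k).2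

lemma th_per {M : ℕ} (k : ℤ) : th M (k + 2 * (M : ℤ)) = th M k := by
  unfold th
  rw [show k + 2 * (M : ℤ) = k + 2 * (M : ℤ) * 1 by ring, Int.add_mul_emod_self_left]

lemma ypt_per {M : ℕ} (hM : 2 ≤ M) (k : ℤ) : ypt M (k + 2 * (M : ℤ)) = ypt M k + 2 * Real.pi := by
  unfold ypt
  rw [th_per]
  have hMne : ((M : ℝ)) ≠ 0 := ne_of_gt (Mpos hM)
  unfold del
  push_cast
  field_simp
  ring

lemma two_pi_eq {M : ℕ} (hM : 2 ≤ M) : 2 * Real.pi = (2 * (M : ℤ)) * del M := by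
  have hMne : ((M : ℝ)) ≠ 0 := ne_of_gt (Mpos hM)
  unfold del; push_cast; field_simp

lemma pi_eq {M : ℕ} (hM : 2 ≤ M) : Real.pi = (M : ℝ) * del M := by
  have hMne : ((M : ℝ)) ≠ 0 := ne_of_gt (Mpos hM)
  unfold del; field_simp

lemma sgn_cases (x : ℝ) : sgn x = 1 ∨ sgn x = -1 := by
  unfold sgn; split_ifs <;> simp

lemma abs_sgn (x : ℝ) : |sgn x| = 1 := by
  rcases sgn_cases x with h | h <;> rw [h] <;> norm_num

lemma sgn_mul_psh {τ : ℝ} (x : ℝ) : τ ≤ sgn x * psh τ x := by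
  unfold sgn psh
  split_ifs with h
  · rw [neg_one_mul, neg_inf, neg_neg]
    exact le_max_right _ _
  · rw [one_mul]; exact le_max_right _ _

lemma sgn_neg_iff (x : ℝ) : sgn x = -1 ↔ x < 0 := by
  unfold sgn
  split_ifs with h <;> simp [h] <;> norm_num

lemma sgn_pos_iff (x : ℝ) : sgn x = 1 ↔ ¬ x < 0 := by
  unfold sgn
  split_ifs with h <;> simp [h] <;> norm_num

lemma psh_pos_of {τ : ℝ} (x : ℝ) (hx : ¬ x < 0) : τ ≤ psh τ x := by
  unfold psh; rw [if_neg hx]; exact le_max_right _ _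

lemma psh_neg_of {τ : ℝ} (x : ℝ) (hx : x < 0) : psh τ x ≤ -τ := by
  unfold psh; rw [if_pos hx]; exact min_le_right _ _

lemma psh_ne_zero {τ : ℝ} (hτ : 0 < τ) (x : ℝ) : psh τ x ≠ 0 := by
  intro h
  have h2 := sgn_mul_psh (τ := τ) x
  rw [h, mul_zero] at h2
  linarith

lemma abs_psh_sub {τ : ℝ} (hτ : 0 < τ) (x : ℝ) : |psh τ x - x| ≤ τ := by
  unfold psh
  split_ifs with h
  · rw [abs_le]
    constructor
    · have : x - τ ≤ min x (-τ) := le_min (by linarith) (by linarith)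
      linarith
    · have : min x (-τ) ≤ x := min_le_left _ _
      linarith
  · rw [abs_le]
    push_neg at h
    constructor
    · have : x ≤ max x τ := le_max_left _ _
      linarith
    · have : max x τ ≤ x + τ := max_le (by linarith) (by linarith)
      linarith

lemma oppsign {a c : ℝ} (h : sgn a * c ≤ 0) : |c| ≤ |c - a| := by
  unfold sgn at h
  split_ifs at h with ha
  · rw [neg_one_mul, neg_nonpos] at h
    rw [abs_of_nonneg h, abs_of_nonneg (by linarith)]
    linarith
  · push_neg at ha
    rw [one_mul] at h
    rw [abs_of_nonpos h, abs_of_nonpos (by linarith)]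
    linarith

lemma comb_ne_zero {a b t : ℝ} (ht0 : 0 ≤ t) (ht1 : t ≤ 1) (hab : 0 < a * b) :
    a + t * (b - a) ≠ 0 := by
  intro h
  have key : (1 - t) * a + t * b = 0 := by linear_combination h
  rcases lt_trichotomy a 0 with ha | ha | ha
  · have hb : b < 0 := by nlinarith
    have h2 : (1 - t) * a ≤ 0 := mul_nonpos_of_nonneg_of_nonpos (by linarith) ha.le
    have h3 : t * b ≤ 0 := mul_nonpos_of_nonneg_of_nonpos ht0 hb.le
    have h4 : (1 - t) * a = 0 := by linarith
    rcases mul_eq_zero.1 h4 with h5 | h5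
    · have ht : t = 1 := by linarith
      rw [ht, one_mul] at key
      have : (1 - (1:ℝ)) * a = 0 := by ring
      nlinarith
    · exact absurd h5 (ne_of_lt ha)
  · rw [ha, zero_mul] at hab; exact absurd hab (lt_irrefl 0)
  · have hb : 0 < b := by nlinarith
    have h2 : 0 ≤ (1 - t) * a := mul_nonneg (by linarith) ha.le
    have h3 : 0 ≤ t * b := mul_nonneg ht0 hb.le
    have h4 : (1 - t) * a = 0 := by linarith
    rcases mul_eq_zero.1 h4 with h5 | h5
    · have ht : t = 1 := by linarith
      rw [ht, one_mul] at key
      nlinarith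
    · exact absurd h5 (ne_of_gt ha)

lemma comb_zero_right {a b t : ℝ} (ha : a ≠ 0) (hb : b = 0)
    (h : a + t * (b - a) = 0) : t = 1 := by
  subst hb
  have h4 : a * (1 - t) = 0 := by linear_combination h
  rcases mul_eq_zero.1 h4 with h1 | h1
  · exact absurd h1 ha
  · linarith

lemma comb_zero_left {a b t : ℝ} (ha : a = 0) (hb : b ≠ 0)
    (h : a + t * (b - a) = 0) : t = 0 := by
  subst ha
  simp only [zero_add, sub_zero] at h
  rcases mul_eq_zero.1 h with h1 | h1
  · exact h1
  · exact absurd h1 hb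

lemma comb_dist {a b t c : ℝ} (ht0 : 0 ≤ t) (ht1 : t ≤ 1) :
    |a + t * (b - a) - c| ≤ max |a - c| |b - c| := by
  have h : a + t * (b - a) - c = (1 - t) * (a - c) + t * (b - c) := by ring
  rw [h]
  calc |(1 - t) * (a - c) + t * (b - c)| ≤ |(1 - t) * (a - c)| + |t * (b - c)| := abs_add_le _ _
    _ = (1 - t) * |a - c| + t * |b - c| := by
        rw [abs_mul, abs_mul, abs_of_nonneg (by linarith : (0:ℝ) ≤ 1 - t), abs_of_nonneg ht0]
    _ ≤ (1 - t) * max |a - c| |b - c| + t * max |a - c| |b - c| :=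
        add_le_add (mul_le_mul_of_nonneg_left (le_max_left _ _) (by linarith))
          (mul_le_mul_of_nonneg_left (le_max_right _ _) ht0)
    _ = max |a - c| |b - c| := by ring


lemma succ_emod_aux {M : ℕ} (hM : 2 ≤ M) (k : ℤ) :
    (k + 1) % (2*(M:ℤ)) = (k % (2*(M:ℤ)) + 1) % (2*(M:ℤ)) := by
  conv_lhs => rw [Int.add_emod]
  have h1 : (1:ℤ) % (2*(M:ℤ)) = 1 := Int.emod_eq_of_lt (by norm_num) (by omega)
  rw [h1]

lemma succ_emod_M1 {M : ℕ} (hM : 2 ≤ M) {k : ℤ} (h : k % (2*(M:ℤ)) = (M:ℤ) - 1) :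
    (k + 1) % (2*(M:ℤ)) = (M:ℤ) := by
  rw [succ_emod_aux hM, h]
  have : (M:ℤ) - 1 + 1 = M := by ring
  rw [this]
  exact Int.emod_eq_of_lt (by omega) (by omega)

lemma succ_emod_M {M : ℕ} (hM : 2 ≤ M) {k : ℤ} (h : k % (2*(M:ℤ)) = (M:ℤ)) :
    (k + 1) % (2*(M:ℤ)) = (M:ℤ) + 1 := by
  rw [succ_emod_aux hM, h]
  exact Int.emod_eq_of_lt (by omega) (by omega)

lemma succ_emod_ne {M : ℕ} (hM : 2 ≤ M) {k : ℤ} (h : k % (2*(M:ℤ)) ≠ (M:ℤ) - 1) :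
    (k + 1) % (2*(M:ℤ)) ≠ (M:ℤ) := by
  have e0 : 0 ≤ k % (2 * (M : ℤ)) := Int.emod_nonneg k (by omega)
  have e1 : k % (2 * (M : ℤ)) < 2 * (M : ℤ) := Int.emod_lt_of_pos k (by omega)
  rw [succ_emod_aux hM]
  rcases eq_or_lt_of_le (by omega : k % (2*(M:ℤ)) + 1 ≤ 2*(M:ℤ)) with h2 | h2
  · rw [h2, Int.emod_self]; omega
  · rw [Int.emod_eq_of_lt (by omega) h2]; omega

lemma node_eq {M : ℕ} (hM : 2 ≤ M) {k : ℤ} (h : k % (2*(M:ℤ)) = (M:ℤ)) :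
    (k : ℝ) * del M = Real.pi + 2*Real.pi*((k / (2*(M:ℤ)) : ℤ) : ℝ) := by
  have hk : (2*(M:ℤ)) * (k / (2*(M:ℤ))) + (M:ℤ) = k := by
    conv_rhs => rw [← Int.mul_ediv_add_emod k (2*(M:ℤ))]
    rw [h]
  have hkR : (k:ℝ) = 2*(M:ℝ)*((k / (2*(M:ℤ)) : ℤ):ℝ) + (M:ℝ) := by
    have := congrArg (fun z : ℤ => (z : ℝ)) hk
    push_cast at this
    linarith
  rw [hkR, pi_eq hM]
  ring

lemma fpi {f : ℝ → ℝ} (hf0 : f 0 = 1)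
    (hbd : ∀ ξ : ℝ, f ξ ^ 2 + f (ξ + Real.pi) ^ 2 ≤ 1) : f Real.pi = 0 := by
  have h := hbd 0
  rw [zero_add, hf0] at h
  have h2 : f Real.pi ^ 2 ≤ 0 := by nlinarith
  have h3 : f Real.pi ^ 2 = 0 := le_antisymm h2 (sq_nonneg _)
  exact pow_eq_zero_iff (by norm_num) |>.1 h3

lemma fnode {f : ℝ → ℝ} {M : ℕ} (hM : 2 ≤ M)
    (hper : ∀ ξ : ℝ, f (ξ + 2 * Real.pi) = f ξ) (hfpi : f Real.pi = 0)
    {k : ℤ} (h : k % (2*(M:ℤ)) = (M:ℤ)) : f ((k:ℝ) * del M) = 0 := by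
  rw [node_eq hM h]
  have hp : Function.Periodic f (2*Real.pi) := hper
  have h2 := (hp.int_mul (k / (2*(M:ℤ)))) Real.pi
  rw [show Real.pi + 2*Real.pi*((k / (2*(M:ℤ)) : ℤ):ℝ)
      = Real.pi + ((k / (2*(M:ℤ)) : ℤ):ℝ)*(2*Real.pi) by ring, h2, hfpi]

lemma zchar {f : ℝ → ℝ} {M : ℕ} {τ : ℝ} (hM : 2 ≤ M) (hτ : 0 < τ) {ξ : ℝ}
    (hξ : rfun f M τ ξ = 0) :
    (∃ a : ℤ, ξ = Real.pi + 2*Real.pi*a) ∨ (∃ k : ℤ, ξ = ypt M k) := by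
  have hδ := del_pos hM
  set k := ⌊ξ / del M⌋ with hk
  have hu0 : 0 ≤ ξ / del M - k := by
    have := Int.floor_le (ξ / del M); linarith
  have hu1 : ξ / del M - k < 1 := by
    have := Int.lt_floor_add_one (ξ / del M); linarith
  have hθ0 := th_pos hM k
  have hθ1 := th_lt_one hM k
  unfold rfun piece at hξ
  rw [← hk] at hξ
  split_ifs at hξ with hbr
  · -- left piece : between A k and B k
    set t := (ξ / del M - k) / th M k with ht
    have ht0 : 0 ≤ t := div_nonneg hu0 hθ0.le
    have ht1 : t ≤ 1 := by rw [ht, div_le_one hθ0]; exact hbr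
    by_cases h1 : k % (2*(M:ℤ)) = (M:ℤ)
    · have hA : Av f M τ k = 0 := by rw [Av, if_pos h1]
      have hB : Bv f M τ k = τ * sgn (f ((k+1) * del M)) := by
        rw [Bv, if_neg (by rw [h1]; omega), if_pos h1]
      have hBne : Bv f M τ k ≠ 0 := by
        rw [hB]
        rcases sgn_cases (f ((k+1)*del M)) with h|h <;> rw [h] <;> simpa using hτ.ne'
      have ht' : t = 0 := comb_zero_left hA hBne hξ
      have hu : ξ / del M - k = 0 := by
        rcases div_eq_zero_iff.1 ht' with h2 | h2
        · exact h2
        · exact absurd h2 hθ0.ne'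
      have hξk : ξ = (k:ℝ) * del M := by
        have : ξ / del M = k := by linarith
        field_simp at this
        linarith [this]
      left
      exact ⟨k / (2*(M:ℤ)), by rw [hξk, node_eq hM h1]⟩
    · by_cases h2 : k % (2*(M:ℤ)) = (M:ℤ) - 1
      · have hA : Av f M τ k = psh τ (f (k * del M)) := by rw [Av, if_neg h1]
        have hB : Bv f M τ k = τ * sgn (f (k * del M)) := by rw [Bv, if_pos h2]
        have hpos : 0 < Av f M τ k * Bv f M τ k := by
          rw [hA, hB]
          have := sgn_mul_psh (τ := τ) (f (k * del M))
          nlinarith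
        exact absurd hξ (comb_ne_zero ht0 ht1 hpos)
      · by_cases h3 : sgn (f (k * del M)) = sgn (f ((k+1) * del M))
        · have hA : Av f M τ k = psh τ (f (k * del M)) := by rw [Av, if_neg h1]
          have hB : Bv f M τ k
              = sgn (f (k * del M)) * max (sgn (f (k * del M)) * f (ypt M k)) τ := by
            rw [Bv, if_neg h2, if_neg h1, if_pos h3]
          have hpos : 0 < Av f M τ k * Bv f M τ k := by
            rw [hA, hB]
            have hs := sgn_mul_psh (τ := τ) (f (k * del M))
            have hm := le_max_right (sgn (f (k * del M)) * f (ypt M k)) τ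
            nlinarith
          exact absurd hξ (comb_ne_zero ht0 ht1 hpos)
        · have hA : Av f M τ k = psh τ (f (k * del M)) := by rw [Av, if_neg h1]
          have hAne : Av f M τ k ≠ 0 := by rw [hA]; exact psh_ne_zero hτ _
          have hB : Bv f M τ k = 0 := by rw [Bv, if_neg h2, if_neg h1, if_neg h3]
          have ht' : t = 1 := comb_zero_right hAne hB hξ
          have hu : ξ / del M - k = th M k := by
            rw [ht, div_eq_one_iff_eq hθ0.ne'] at ht'
            exact ht'
          right
          refine ⟨k, ?_⟩
          unfold ypt
          have : ξ / del M = (k:ℝ) + th M k := by linarith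
          field_simp at this
          linarith [this]
  · -- right piece : between B k and A (k+1)
    push_neg at hbr
    set t := (ξ / del M - k - th M k) / (1 - th M k) with ht
    have ht0 : 0 ≤ t := div_nonneg (by linarith) (by linarith)
    have ht1' : t < 1 := by
      rw [ht, div_lt_one (by linarith)]
      linarith
    have ht1 : t ≤ 1 := ht1'.le
    by_cases h1 : k % (2*(M:ℤ)) = (M:ℤ)
    · have hB : Bv f M τ k = τ * sgn (f ((k+1) * del M)) := by
        rw [Bv, if_neg (by rw [h1]; omega), if_pos h1]
      have hA' : Av f M τ (k+1) = psh τ (f ((k+1) * del M)) := by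
        rw [Av, if_neg (by rw [succ_emod_M hM h1]; omega)]; norm_cast
      have hpos : 0 < Bv f M τ k * Av f M τ (k+1) := by
        rw [hB, hA']
        have := sgn_mul_psh (τ := τ) (f ((k+1) * del M))
        nlinarith
      exact absurd hξ (comb_ne_zero ht0 ht1 hpos)
    · by_cases h2 : k % (2*(M:ℤ)) = (M:ℤ) - 1
      · have hB : Bv f M τ k = τ * sgn (f (k * del M)) := by rw [Bv, if_pos h2]
        have hBne : Bv f M τ k ≠ 0 := by
          rw [hB]
          rcases sgn_cases (f (k*del M)) with h|h <;> rw [h] <;> simpa using hτ.ne'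
        have hA' : Av f M τ (k+1) = 0 := by rw [Av, if_pos (succ_emod_M1 hM h2)]
        have := comb_zero_right hBne hA' hξ
        linarith
      · by_cases h3 : sgn (f (k * del M)) = sgn (f ((k+1) * del M))
        · have hB : Bv f M τ k
              = sgn (f (k * del M)) * max (sgn (f (k * del M)) * f (ypt M k)) τ := by
            rw [Bv, if_neg h2, if_neg h1, if_pos h3]
          have hA' : Av f M τ (k+1) = psh τ (f ((k+1) * del M)) := by
            rw [Av, if_neg (succ_emod_ne hM h2)]; norm_cast
          have hpos : 0 < Bv f M τ k * Av f M τ (k+1) := by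
            rw [hB, hA', h3]
            have hs := sgn_mul_psh (τ := τ) (f ((k+1) * del M))
            have hm := le_max_right (sgn (f ((k+1) * del M)) * f (ypt M k)) τ
            nlinarith
          exact absurd hξ (comb_ne_zero ht0 ht1 hpos)
        · have hB : Bv f M τ k = 0 := by rw [Bv, if_neg h2, if_neg h1, if_neg h3]
          have hA' : Av f M τ (k+1) = psh τ (f ((k+1) * del M)) := by
            rw [Av, if_neg (succ_emod_ne hM h2)]; norm_cast
          have hA'ne : Av f M τ (k+1) ≠ 0 := by rw [hA']; exact psh_ne_zero hτ _
          have ht' : t = 0 := comb_zero_left hB hA'ne hξ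
          have hu : ξ / del M - k - th M k = 0 := by
            rcases div_eq_zero_iff.1 ht' with h4 | h4
            · exact h4
            · linarith [h4]
          linarith


lemma sgn_mul_self (x : ℝ) : sgn x * sgn x = 1 := by
  rcases sgn_cases x with h | h <;> rw [h] <;> norm_num

lemma EA {f : ℝ → ℝ} {M : ℕ} {τ : ℝ} (hM : 2 ≤ M) (hτ : 0 < τ)
    (hper : ∀ ξ : ℝ, f (ξ + 2 * Real.pi) = f ξ) (hfpi : f Real.pi = 0) (k : ℤ) :
    |Av f M τ k - f ((k:ℝ) * del M)| ≤ τ := by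
  by_cases h1 : k % (2*(M:ℤ)) = (M:ℤ)
  · rw [Av, if_pos h1, fnode hM hper hfpi h1]
    simpa using hτ.le
  · rw [Av, if_neg h1]
    exact abs_psh_sub hτ _

lemma EB {f : ℝ → ℝ} {M : ℕ} {τ ε₂ : ℝ} (hM : 2 ≤ M) (hτ : 0 < τ)
    (hper : ∀ ξ : ℝ, f (ξ + 2 * Real.pi) = f ξ) (hfpi : f Real.pi = 0)
    (hUC : ∀ x y : ℝ, |x - y| ≤ del M → |f x - f y| ≤ ε₂) (k : ℤ) :
    |Bv f M τ k - f (ypt M k)| ≤ τ + ε₂ := by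
  have hδ := del_pos hM
  have hθ0 := th_pos hM k
  have hθ1 := th_lt_one hM k
  have hε₂0 : 0 ≤ ε₂ := by
    have := hUC 0 0 (by simpa using hδ.le)
    simpa using this
  have hyk : |ypt M k - (k:ℝ) * del M| ≤ del M := by
    unfold ypt
    rw [abs_le]
    constructor <;> nlinarith
  have hyk1 : |ypt M k - ((k:ℝ)+1) * del M| ≤ del M := by
    unfold ypt
    rw [abs_le]
    constructor <;> nlinarith
  by_cases h2 : k % (2*(M:ℤ)) = (M:ℤ) - 1
  · rw [Bv, if_pos h2]
    have hf1 : f (((k:ℝ)+1) * del M) = 0 := by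
      have := fnode hM hper hfpi (succ_emod_M1 hM h2)
      push_cast at this
      exact this
    have hfy : |f (ypt M k)| ≤ ε₂ := by
      have := hUC (ypt M k) (((k:ℝ)+1) * del M) hyk1
      rwa [hf1, sub_zero] at this
    have habs : |τ * sgn (f ((k:ℝ) * del M))| = τ := by
      rw [abs_mul, abs_sgn, mul_one, abs_of_nonneg hτ.le]
    calc |τ * sgn (f ((k:ℝ) * del M)) - f (ypt M k)|
        ≤ |τ * sgn (f ((k:ℝ) * del M))| + |f (ypt M k)| := abs_sub _ _
      _ ≤ τ + ε₂ := by rw [habs]; linarith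
  · by_cases h1 : k % (2*(M:ℤ)) = (M:ℤ)
    · rw [Bv, if_neg h2, if_pos h1]
      have hf1 : f ((k:ℝ) * del M) = 0 := fnode hM hper hfpi h1
      have hfy : |f (ypt M k)| ≤ ε₂ := by
        have := hUC (ypt M k) ((k:ℝ) * del M) hyk
        rwa [hf1, sub_zero] at this
      have habs : |τ * sgn (f (((k:ℝ)+1) * del M))| = τ := by
        rw [abs_mul, abs_sgn, mul_one, abs_of_nonneg hτ.le]
      calc |τ * sgn (f (((k:ℝ)+1) * del M)) - f (ypt M k)|
          ≤ |τ * sgn (f (((k:ℝ)+1) * del M))| + |f (ypt M k)| := abs_sub _ _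
        _ ≤ τ + ε₂ := by rw [habs]; linarith
    · by_cases h3 : sgn (f ((k:ℝ) * del M)) = sgn (f (((k:ℝ)+1) * del M))
      · rw [Bv, if_neg h2, if_neg h1, if_pos h3]
        set σ := sgn (f ((k:ℝ) * del M)) with hσ
        set c := f (ypt M k) with hc
        have hσ2 : σ * σ = 1 := sgn_mul_self _
        have heq : σ * max (σ * c) τ - c = σ * (max (σ * c) τ - σ * c) := by
          have h4 : σ * (max (σ * c) τ - σ * c) = σ * max (σ * c) τ - (σ * σ) * c := by ring
          rw [h4, hσ2, one_mul]
        rw [heq, abs_mul, abs_sgn, one_mul,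
          abs_of_nonneg (by simp [sub_nonneg, le_max_left] : (0:ℝ) ≤ max (σ * c) τ - σ * c)]
        rcases le_or_gt τ (σ * c) with h4 | h4
        · rw [max_eq_left h4]; linarith
        · rw [max_eq_right h4.le]
          rcases le_or_gt 0 (σ * c) with h5 | h5
          · linarith
          · have hopp : |c| ≤ |c - f ((k:ℝ) * del M)| := oppsign (by rw [← hσ]; linarith)
            have := hUC (ypt M k) ((k:ℝ) * del M) hyk
            have hcb : |c| ≤ ε₂ := le_trans hopp this
            have : σ * c ≥ -|c| := by
              rcases sgn_cases (f ((k:ℝ) * del M)) with h6 | h6 <;> rw [← hσ] at h6 <;>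
                rw [h6] <;> cases abs_cases c <;> linarith [abs_nonneg c]
            linarith
      · rw [Bv, if_neg h2, if_neg h1, if_neg h3]
        set c := f (ypt M k) with hc
        have hcb : |c| ≤ ε₂ := by
          rcases le_or_gt c 0 with hcs | hcs
          · rcases sgn_cases (f ((k:ℝ) * del M)) with h6 | h6
            · have hopp : |c| ≤ |c - f ((k:ℝ) * del M)| :=
                oppsign (by rw [h6, one_mul]; exact hcs)
              exact le_trans hopp (hUC _ _ hyk)
            · rcases sgn_cases (f (((k:ℝ)+1) * del M)) with h7 | h7
              · have hopp : |c| ≤ |c - f (((k:ℝ)+1) * del M)| :=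
                  oppsign (by rw [h7, one_mul]; exact hcs)
                exact le_trans hopp (hUC _ _ hyk1)
              · exact absurd (h6.trans h7.symm) h3
          · rcases sgn_cases (f ((k:ℝ) * del M)) with h6 | h6
            · rcases sgn_cases (f (((k:ℝ)+1) * del M)) with h7 | h7
              · exact absurd (h6.trans h7.symm) h3
              · have hopp : |c| ≤ |c - f (((k:ℝ)+1) * del M)| :=
                  oppsign (by rw [h7]; nlinarith)
                exact le_trans hopp (hUC _ _ hyk1)
            · have hopp : |c| ≤ |c - f ((k:ℝ) * del M)| :=
                oppsign (by rw [h6]; nlinarith)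
              exact le_trans hopp (hUC _ _ hyk)
        rw [zero_sub, abs_neg]
        linarith

lemma approx {f : ℝ → ℝ} {M : ℕ} {τ ε₂ : ℝ} (hM : 2 ≤ M) (hτ : 0 < τ)
    (hper : ∀ ξ : ℝ, f (ξ + 2 * Real.pi) = f ξ) (hfpi : f Real.pi = 0)
    (hUC : ∀ x y : ℝ, |x - y| ≤ del M → |f x - f y| ≤ ε₂) (ξ : ℝ) :
    |rfun f M τ ξ - f ξ| ≤ τ + 2 * ε₂ := by
  have hδ := del_pos hM
  have hε₂0 : 0 ≤ ε₂ := by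
    have := hUC 0 0 (by simpa using hδ.le)
    simpa using this
  set k := ⌊ξ / del M⌋ with hk
  have hu0 : 0 ≤ ξ / del M - k := by
    have := Int.floor_le (ξ / del M); linarith
  have hu1 : ξ / del M - k < 1 := by
    have := Int.lt_floor_add_one (ξ / del M); linarith
  have hθ0 := th_pos hM k
  have hθ1 := th_lt_one hM k
  have hξu : ξ = ((k:ℝ) + (ξ / del M - k)) * del M := by
    have h0 : ξ / del M * del M = ξ := div_mul_cancel₀ _ hδ.ne'
    linarith [h0]
  have d1 : |(k:ℝ) * del M - ξ| ≤ del M := by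
    rw [abs_le]; constructor <;> nlinarith
  have d2 : |ypt M k - ξ| ≤ del M := by
    unfold ypt; rw [abs_le]; constructor <;> nlinarith
  have d3 : |((k:ℝ)+1) * del M - ξ| ≤ del M := by
    rw [abs_le]; constructor <;> nlinarith
  have hEA := EA hM hτ hper hfpi k
  have hEA1 := EA hM hτ hper hfpi (k+1)
  push_cast at hEA1
  have hEB := EB hM hτ hper hfpi hUC k
  have bA : |Av f M τ k - f ξ| ≤ τ + ε₂ := by
    calc |Av f M τ k - f ξ| ≤ |Av f M τ k - f ((k:ℝ) * del M)| + |f ((k:ℝ) * del M) - f ξ| :=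
          abs_sub_le _ _ _
      _ ≤ τ + ε₂ := add_le_add hEA (hUC _ _ d1)
  have bB : |Bv f M τ k - f ξ| ≤ τ + 2 * ε₂ := by
    calc |Bv f M τ k - f ξ| ≤ |Bv f M τ k - f (ypt M k)| + |f (ypt M k) - f ξ| :=
          abs_sub_le _ _ _
      _ ≤ (τ + ε₂) + ε₂ := add_le_add hEB (hUC _ _ d2)
      _ = τ + 2 * ε₂ := by ring
  have bA1 : |Av f M τ (k+1) - f ξ| ≤ τ + ε₂ := by
    calc |Av f M τ (k+1) - f ξ|
        ≤ |Av f M τ (k+1) - f (((k:ℝ)+1) * del M)| + |f (((k:ℝ)+1) * del M) - f ξ| :=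
          abs_sub_le _ _ _
      _ ≤ τ + ε₂ := add_le_add hEA1 (hUC _ _ d3)
  unfold rfun piece
  rw [← hk]
  split_ifs with hbr
  · set t := (ξ / del M - k) / th M k with ht
    have ht0 : 0 ≤ t := div_nonneg hu0 hθ0.le
    have ht1 : t ≤ 1 := by rw [ht, div_le_one hθ0]; exact hbr
    calc |Av f M τ k + t * (Bv f M τ k - Av f M τ k) - f ξ|
        ≤ max |Av f M τ k - f ξ| |Bv f M τ k - f ξ| := comb_dist ht0 ht1
      _ ≤ τ + 2 * ε₂ := max_le (by linarith) bB
  · push_neg at hbr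
    set t := (ξ / del M - k - th M k) / (1 - th M k) with ht
    have ht0 : 0 ≤ t := div_nonneg (by linarith) (by linarith)
    have ht1 : t ≤ 1 := by rw [ht, div_le_one (by linarith)]; linarith
    calc |Bv f M τ k + t * (Av f M τ (k+1) - Bv f M τ k) - f ξ|
        ≤ max |Bv f M τ k - f ξ| |Av f M τ (k+1) - f ξ| := comb_dist ht0 ht1
      _ ≤ τ + 2 * ε₂ := max_le bB (by linarith)

lemma Av_per {f : ℝ → ℝ} {M : ℕ} {τ : ℝ} (hM : 2 ≤ M)
    (hper : ∀ ξ : ℝ, f (ξ + 2 * Real.pi) = f ξ) (k : ℤ) :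
    Av f M τ (k + 2*(M:ℤ)) = Av f M τ k := by
  unfold Av
  have hm : (k + 2*(M:ℤ)) % (2*(M:ℤ)) = k % (2*(M:ℤ)) := by
    rw [show k + 2*(M:ℤ) = k + 2*(M:ℤ)*1 by ring, Int.add_mul_emod_self_left]
  rw [hm]
  have hx : ((k + 2*(M:ℤ) : ℤ) : ℝ) * del M = (k:ℝ) * del M + 2*Real.pi := by
    rw [two_pi_eq hM]; push_cast; ring
  rw [hx, hper]

lemma Bv_per {f : ℝ → ℝ} {M : ℕ} {τ : ℝ} (hM : 2 ≤ M)
    (hper : ∀ ξ : ℝ, f (ξ + 2 * Real.pi) = f ξ) (k : ℤ) :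
    Bv f M τ (k + 2*(M:ℤ)) = Bv f M τ k := by
  unfold Bv
  have hm : (k + 2*(M:ℤ)) % (2*(M:ℤ)) = k % (2*(M:ℤ)) := by
    rw [show k + 2*(M:ℤ) = k + 2*(M:ℤ)*1 by ring, Int.add_mul_emod_self_left]
  rw [hm]
  have hx : ((k + 2*(M:ℤ) : ℤ) : ℝ) * del M = (k:ℝ) * del M + 2*Real.pi := by
    rw [two_pi_eq hM]; push_cast; ring
  have hx1 : (((k + 2*(M:ℤ) : ℤ) : ℝ) + 1) * del M = ((k:ℝ) + 1) * del M + 2*Real.pi := by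
    rw [two_pi_eq hM]; push_cast; ring
  rw [hx, hx1, ypt_per hM]
  simp only [hper]

lemma rfun_per {f : ℝ → ℝ} {M : ℕ} {τ : ℝ} (hM : 2 ≤ M)
    (hper : ∀ ξ : ℝ, f (ξ + 2 * Real.pi) = f ξ) (ξ : ℝ) :
    rfun f M τ (ξ + 2*Real.pi) = rfun f M τ ξ := by
  have hδ := del_pos hM
  have h2π : (ξ + 2*Real.pi) / del M = ξ / del M + ((2*(M:ℤ) : ℤ) : ℝ) := by
    rw [two_pi_eq hM]; field_simp; push_cast; ring
  have hfl : ⌊(ξ + 2*Real.pi) / del M⌋ = ⌊ξ / del M⌋ + 2*(M:ℤ) := by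
    rw [h2π, Int.floor_add_intCast]
  unfold rfun piece
  rw [hfl, h2π]
  set k := ⌊ξ / del M⌋
  have eu : ξ/del M + ((2*(M:ℤ) : ℤ):ℝ) - ((k + 2*(M:ℤ) : ℤ):ℝ) = ξ/del M - k := by
    push_cast; ring
  have ek : k + 2*(M:ℤ) + 1 = (k+1) + 2*(M:ℤ) := by ring
  rw [eu, th_per, Av_per hM hper, Bv_per hM hper, ek, Av_per hM hper]

lemma rfun_zero {f : ℝ → ℝ} {M : ℕ} {τ : ℝ} (hM : 2 ≤ M) (hτ0 : 0 < τ) (hτ1 : τ ≤ 1)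
    (hf0 : f 0 = 1) : rfun f M τ 0 = 1 := by
  have hδ := del_pos hM
  unfold rfun piece
  simp only [zero_div, Int.floor_zero, Int.cast_zero, zero_sub, neg_zero, sub_zero]
  rw [if_pos (th_pos hM 0).le]
  rw [zero_mul, add_zero]
  rw [Av, if_neg (by rw [Int.zero_emod]; omega)]
  simp only [Int.cast_zero, zero_mul, hf0]
  unfold psh
  rw [if_neg (by norm_num)]
  exact max_eq_left hτ1

lemma rfun_pi {f : ℝ → ℝ} {M : ℕ} {τ : ℝ} (hM : 2 ≤ M) : rfun f M τ Real.pi = 0 := by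
  have hδ := del_pos hM
  have hMne : ((M:ℝ)) ≠ 0 := ne_of_gt (Mpos hM)
  have hpi : Real.pi / del M = ((M:ℤ):ℝ) := by
    unfold del; push_cast; field_simp
  unfold rfun piece
  rw [hpi, Int.floor_intCast]
  rw [if_pos (by rw [sub_self]; exact (th_pos hM _).le)]
  rw [sub_self, zero_div, zero_mul, add_zero]
  rw [Av, if_pos (Int.emod_eq_of_lt (by omega) (by omega))]

lemma piece_cont {f : ℝ → ℝ} {M : ℕ} {τ : ℝ} (hM : 2 ≤ M) (k : ℤ) :
    Continuous (piece f M τ k) := by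
  unfold piece
  have hu : Continuous fun ξ : ℝ => ξ / del M - (k:ℝ) :=
    (continuous_id.div_const _).sub continuous_const
  apply Continuous.if_le
  · exact continuous_const.add ((hu.div_const _).mul continuous_const)
  · exact continuous_const.add (((hu.sub continuous_const).div_const _).mul continuous_const)
  · exact hu
  · exact continuous_const
  · intro ξ hb
    rw [hb, div_self (th_pos hM k).ne', one_mul, sub_self, zero_div, zero_mul, add_zero]
    ring

lemma rfun_eqOn {f : ℝ → ℝ} {M : ℕ} {τ : ℝ} (hM : 2 ≤ M) (k : ℤ) :
    ∀ ξ ∈ Set.Icc ((k:ℝ) * del M) (((k:ℝ)+1) * del M), rfun f M τ ξ = piece f M τ k ξ := by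
  have hδ := del_pos hM
  rintro ξ ⟨hl, hr⟩
  rcases eq_or_lt_of_le hr with heq | hlt
  · have hd : ξ / del M = (k:ℝ) + 1 := by
      rw [heq]; field_simp
    have hfl : ⌊ξ / del M⌋ = k + 1 := by
      rw [hd, show ((k:ℝ) + 1) = ((k+1 : ℤ):ℝ) by push_cast; ring, Int.floor_intCast]
    unfold rfun piece
    rw [hfl, hd]
    have e1 : (k:ℝ) + 1 - ((k+1:ℤ):ℝ) = 0 := by push_cast; ring
    have e2 : (k:ℝ) + 1 - (k:ℝ) = 1 := by ring
    rw [e1, e2]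
    rw [if_pos (th_pos hM (k+1)).le, if_neg (by push_neg; exact th_lt_one hM k)]
    rw [zero_div, zero_mul, add_zero]
    rw [div_self (by linarith [th_lt_one hM k] : (1:ℝ) - th M k ≠ 0), one_mul]
    ring
  · have hfl : ⌊ξ / del M⌋ = k := by
      rw [Int.floor_eq_iff]
      constructor
      · rw [le_div_iff₀ hδ]; exact hl
      · rw [div_lt_iff₀ hδ]; push_cast; linarith
    unfold rfun
    rw [hfl]

lemma rfun_cont {f : ℝ → ℝ} {M : ℕ} {τ : ℝ} (hM : 2 ≤ M) : Continuous (rfun f M τ) := by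
  have hδ := del_pos hM
  rw [continuous_iff_continuousAt]
  intro x
  set k := ⌊x / del M⌋ with hk
  have hfl0 := Int.floor_le (x / del M)
  have hfl1 := Int.lt_floor_add_one (x / del M)
  have hx0 : (k:ℝ) * del M ≤ x := by
    calc (k:ℝ) * del M ≤ (x / del M) * del M := by nlinarith
      _ = x := div_mul_cancel₀ _ hδ.ne'
  have hx1 : x < ((k:ℝ)+1) * del M := by
    calc x = (x / del M) * del M := (div_mul_cancel₀ _ hδ.ne').symm
      _ < ((k:ℝ)+1) * del M := by nlinarith
  rcases eq_or_lt_of_le hx0 with heq | hlt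
  · have hR : ContinuousWithinAt (rfun f M τ) (Set.Ici x) x := by
      have hmem : Set.Icc ((k:ℝ) * del M) (((k:ℝ)+1) * del M) ∈ nhdsWithin x (Set.Ici x) :=
        Icc_mem_nhdsGE_of_mem ⟨hx0, hx1⟩
      exact ContinuousWithinAt.congr_of_eventuallyEq
        ((piece_cont hM k).continuousWithinAt)
        (Filter.eventuallyEq_of_mem hmem (fun ξ hξ => rfun_eqOn hM k ξ hξ))
        (rfun_eqOn hM k x ⟨hx0, hx1.le⟩)
    have hL : ContinuousWithinAt (rfun f M τ) (Set.Iic x) x := by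
      have hlow : ((k - 1 : ℤ):ℝ) * del M < x := by
        rw [← heq]; push_cast; nlinarith
      have hupp : x ≤ (((k - 1 : ℤ):ℝ) + 1) * del M := by
        rw [← heq]; push_cast; nlinarith
      have hmem : Set.Icc (((k - 1 : ℤ):ℝ) * del M) ((((k - 1 : ℤ):ℝ)+1) * del M)
          ∈ nhdsWithin x (Set.Iic x) :=
        Icc_mem_nhdsLE_of_mem ⟨hlow, hupp⟩
      exact ContinuousWithinAt.congr_of_eventuallyEq
        ((piece_cont hM (k-1)).continuousWithinAt)
        (Filter.eventuallyEq_of_mem hmem (fun ξ hξ => rfun_eqOn hM (k-1) ξ hξ))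
        (rfun_eqOn hM (k-1) x ⟨hlow.le, hupp⟩)
    have := hL.union hR
    rwa [Set.Iic_union_Ici, continuousWithinAt_univ] at this
  · have hmem : Set.Icc ((k:ℝ) * del M) (((k:ℝ)+1) * del M) ∈ nhds x := Icc_mem_nhds hlt hx1
    exact ((piece_cont hM k).continuousAt).congr
      (Filter.eventuallyEq_of_mem hmem (fun ξ hξ => (rfun_eqOn hM k ξ hξ).symm))


lemma ypt_not_int_mul {M : ℕ} (hM : 2 ≤ M) (k a : ℤ) (h : ypt M k = 2*Real.pi*a) : False := by
  have hδ := del_pos hM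
  have hθ := th_bounds hM k
  have h2 : ((k:ℝ) + th M k) * del M = ((2*(M:ℤ)*a : ℤ):ℝ) * del M := by
    unfold ypt at h
    rw [two_pi_eq hM] at h
    push_cast at h ⊢
    linear_combination h
  have h3 : (k:ℝ) + th M k = ((2*(M:ℤ)*a - k : ℤ):ℝ) + (k:ℝ) := by
    have := mul_right_cancel₀ hδ.ne' h2
    push_cast at this ⊢
    linarith
  have h4 : th M k = ((2*(M:ℤ)*a - k : ℤ):ℝ) := by linarith
  have h5 : (0:ℤ) < 2*(M:ℤ)*a - k := by
    have : (0:ℝ) < ((2*(M:ℤ)*a - k : ℤ):ℝ) := by rw [← h4]; linarith [hθ.1]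
    exact_mod_cast this
  have h6 : 2*(M:ℤ)*a - k < 1 := by
    have : ((2*(M:ℤ)*a - k : ℤ):ℝ) < 1 := by rw [← h4]; exact hθ.2
    exact_mod_cast this
  omega

lemma ypt_add_pi_ne {M : ℕ} (hM : 2 ≤ M) (k j : ℤ) (h : ypt M k + Real.pi = ypt M j) : False := by
  have hδ := del_pos hM
  have h2 : ((k:ℝ) + th M k + (M:ℝ)) * del M = ((j:ℝ) + th M j) * del M := by
    unfold ypt at h
    rw [pi_eq hM] at h
    linear_combination h
  have h3 : (k:ℝ) + th M k + (M:ℝ) = (j:ℝ) + th M j := mul_right_cancel₀ hδ.ne' h2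
  have h4 : th M j - th M k = ((k + (M:ℤ) - j : ℤ):ℝ) := by push_cast; linarith
  have h5 : th M j - th M k = ((j % (2*(M:ℤ)) - k % (2*(M:ℤ)) : ℤ):ℝ) * mu M := by
    unfold th; push_cast; ring
  by_cases hd : j % (2*(M:ℤ)) = k % (2*(M:ℤ))
  · have h6 : th M j - th M k = 0 := by rw [h5, hd]; push_cast; ring
    have h7 : (k + (M:ℤ) - j : ℤ) = 0 := by
      have : ((k + (M:ℤ) - j : ℤ):ℝ) = 0 := by rw [← h4]; linarith
      exact_mod_cast this
    have h8 : (j - k) % (2*(M:ℤ)) = 0 := Int.emod_eq_emod_iff_emod_sub_eq_zero.1 hd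
    have h9 : (2*(M:ℤ)) ∣ (j - k) := Int.dvd_of_emod_eq_zero h8
    obtain ⟨c, hc⟩ := h9
    have h10 : (M:ℤ) * (2*c - 1) = 0 := by linear_combination -hc - h7
    rcases mul_eq_zero.1 h10 with h11 | h11
    · have : (M:ℤ) = 0 := h11
      omega
    · omega
  · have hdne : (j % (2*(M:ℤ)) - k % (2*(M:ℤ)) : ℤ) ≠ 0 := fun hc => hd (by omega)
    have hirr : Irrational (((j % (2*(M:ℤ)) - k % (2*(M:ℤ)) : ℤ):ℝ) * mu M) :=
      (mu_irr hM).intCast_mul hdne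
    rw [← h5, h4] at hirr
    exact (Rat.not_irrational _) (by exact_mod_cast hirr)

lemma ypt_rat {M : ℕ} (hM : 2 ≤ M) (k m : ℤ) (L : ℕ) (hL : 0 < L)
    (h : (L:ℝ) * (ypt M k - Real.pi) = 2*Real.pi*m) : False := by
  have hδ := del_pos hM
  have hLne : ((L:ℕ):ℝ) ≠ 0 := Nat.cast_ne_zero.2 hL.ne'
  have h2 : ((L:ℝ) * ((k:ℝ) + th M k - (M:ℝ))) * del M = (2*(M:ℝ)*(m:ℝ)) * del M := by
    unfold ypt at h
    rw [two_pi_eq hM, pi_eq hM] at h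
    push_cast at h ⊢
    linear_combination h
  have h3 : (L:ℝ) * ((k:ℝ) + th M k - (M:ℝ)) = 2*(M:ℝ)*(m:ℝ) := mul_right_cancel₀ hδ.ne' h2
  set q : ℚ := ((2*m*(M:ℤ) - (L:ℤ)*(k - (M:ℤ)) : ℤ) : ℚ) / ((L:ℕ):ℚ) - 1/2 with hq
  have h6 : th M k = (2*(m:ℝ)*(M:ℝ) - (L:ℝ)*((k:ℝ) - (M:ℝ))) / (L:ℝ) := by
    rw [eq_div_iff hLne]
    linear_combination h3
  have hcast : ((k % (2*(M:ℤ)) + 1 : ℤ):ℝ) * mu M = (q:ℝ) := by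
    have h5 : ((k % (2*(M:ℤ)) + 1 : ℤ):ℝ) * mu M = th M k - 1/2 := by unfold th; ring
    rw [h5, h6, hq]
    push_cast
    ring
  have hne : (k % (2*(M:ℤ)) + 1 : ℤ) ≠ 0 := by
    have := Int.emod_nonneg k (show (2*(M:ℤ)) ≠ 0 by omega)
    omega
  exact ((mu_irr hM).intCast_mul hne).ne_rat q hcast

lemma cycle_pow {n : ℕ} (hn : 0 < n) (b : Fin n → ℂ)
    (hsq : ∀ (j : ℕ) (hj : j < n),
      b ⟨(j + 1) % n, Nat.mod_lt _ (Nat.zero_lt_of_lt hj)⟩ = b ⟨j, hj⟩ ^ 2) :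
    ∀ (t : ℕ) (j : ℕ) (hj : j < n),
      b ⟨(j + t) % n, Nat.mod_lt _ hn⟩ = b ⟨j, hj⟩ ^ (2^t) := by
  intro t
  induction t with
  | zero =>
    intro j hj
    have h1 : (j + 0) % n = j := by rw [Nat.add_zero]; exact Nat.mod_eq_of_lt hj
    rw [pow_zero, pow_one]
    exact congrArg b (Fin.ext h1)
  | succ t ih =>
    intro j hj
    have h1 : (j + (t+1)) % n = ((j + t) % n + 1) % n := by
      rw [← Nat.add_assoc]
      exact (Nat.mod_add_mod (j+t) n 1).symm
    have h2 := hsq ((j + t) % n) (Nat.mod_lt _ hn)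
    have h3 : b ⟨(j + (t+1)) % n, Nat.mod_lt _ hn⟩
        = b ⟨((j + t) % n + 1) % n,
            Nat.mod_lt _ (Nat.zero_lt_of_lt (Nat.mod_lt (j+t) hn))⟩ :=
      congrArg b (Fin.ext h1)
    rw [h3, h2, ih j hj, ← pow_mul, pow_succ]

end Step1Aux

set_option maxHeartbeats 1600000 in
open Step1Aux in
theorem stmt1 (f : ℝ → ℝ) (hf : Continuous f)
    (hper : ∀ ξ : ℝ, f (ξ + 2 * Real.pi) = f ξ)
    (hf0 : f 0 = 1)
    (hbd : ∀ ξ : ℝ, f ξ ^ 2 + f (ξ + Real.pi) ^ 2 ≤ 1)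
    (ε : ℝ) (hε : 0 < ε) :
    ∃ g : ℝ → ℝ, Continuous g ∧ (∀ ξ : ℝ, g (ξ + 2 * Real.pi) = g ξ) ∧
      g 0 = 1 ∧
      (∀ ξ : ℝ, |f ξ - g ξ| < ε) ∧
      (∀ ξ : ℝ, g ξ ^ 2 + g (ξ + Real.pi) ^ 2 ≤ 1) ∧
      {ξ ∈ Set.Ico (0 : ℝ) (2 * Real.pi) | g ξ = 0}.Finite ∧
      (¬ ∃ α : ℝ, g α = 0 ∧ g (α + Real.pi) = 0) ∧
      ¬ HasNontrivialCycle g := by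
  have hπ := Real.pi_pos
  have hfpi : f Real.pi = 0 := fpi hf0 hbd
  have hfabs : ∀ ξ : ℝ, |f ξ| ≤ 1 := by
    intro ξ
    have h := hbd ξ
    have h2 := sq_nonneg (f (ξ + Real.pi))
    rw [abs_le]
    constructor <;> nlinarith
  set ε₂ := min ε 1 / 100 with hε₂def
  have hε₂p : 0 < ε₂ := by
    have : 0 < min ε 1 := lt_min hε one_pos
    rw [hε₂def]; linarith
  have hε₂ε : 100 * ε₂ ≤ ε := by
    have := min_le_left ε 1
    rw [hε₂def]; linarith
  have hε₂1 : ε₂ ≤ 1/100 := by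
    have := min_le_right ε 1
    rw [hε₂def]; linarith
  -- uniform continuity on a compact interval
  obtain ⟨ρ, hρpos, hρ⟩ : ∃ ρ > 0, ∀ x ∈ Set.Icc (-1:ℝ) (2*Real.pi+1),
      ∀ y ∈ Set.Icc (-1:ℝ) (2*Real.pi+1), dist x y < ρ → dist (f x) (f y) < ε₂ := by
    have hcpt : IsCompact (Set.Icc (-1:ℝ) (2*Real.pi+1)) := isCompact_Icc
    have huc := hcpt.uniformContinuousOn_of_continuous hf.continuousOn
    rw [Metric.uniformContinuousOn_iff] at huc
    obtain ⟨ρ, h1, h2⟩ := huc ε₂ hε₂p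
    exact ⟨ρ, h1, fun x hx y hy hd => h2 x hx y hy hd⟩
  -- choose the mesh
  obtain ⟨M0, hM0⟩ := exists_nat_gt (Real.pi / (min ρ 1))
  set M := max M0 2 with hMdef
  have hM : 2 ≤ M := le_max_right _ _
  have hδpos := del_pos (M := M) hM
  have hminpos : 0 < min ρ 1 := lt_min hρpos one_pos
  have hδρ : del M < min ρ 1 := by
    have hM0le : (M0:ℝ) ≤ M := by exact_mod_cast le_max_left M0 2
    have h1 : Real.pi / (min ρ 1) < (M:ℝ) := lt_of_lt_of_le hM0 hM0le
    have hMpos : (0:ℝ) < M := Mpos hM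
    rw [div_lt_iff₀ hminpos] at h1
    unfold del
    rw [div_lt_iff₀ hMpos]
    linarith [h1, mul_comm (min ρ 1) (M:ℝ)]
  have hδ1 : del M ≤ 1 := le_trans hδρ.le (min_le_right _ _)
  have hperiod : Function.Periodic f (2*Real.pi) := hper
  have hUC : ∀ x y : ℝ, |x - y| ≤ del M → |f x - f y| ≤ ε₂ := by
    intro x y hxy
    set n := ⌊x / (2*Real.pi)⌋ with hn
    have h2π : (0:ℝ) < 2*Real.pi := by linarith
    have hfl0 := Int.floor_le (x / (2*Real.pi))
    have hfl1 := Int.lt_floor_add_one (x / (2*Real.pi))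
    have hx0 : 0 ≤ x - (n:ℝ)*(2*Real.pi) := by
      have h3 : (n:ℝ)*(2*Real.pi) ≤ (x/(2*Real.pi))*(2*Real.pi) := by nlinarith
      rw [div_mul_cancel₀ _ h2π.ne'] at h3
      linarith
    have hx1 : x - (n:ℝ)*(2*Real.pi) < 2*Real.pi := by
      have h3 : (x/(2*Real.pi))*(2*Real.pi) < ((n:ℝ)+1)*(2*Real.pi) := by nlinarith
      rw [div_mul_cancel₀ _ h2π.ne'] at h3
      linarith
    have habs1 : |x - y| ≤ 1 := le_trans hxy hδ1
    have hab := abs_le.1 habs1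
    have hmemx : x - (n:ℝ)*(2*Real.pi) ∈ Set.Icc (-1:ℝ) (2*Real.pi+1) :=
      ⟨by linarith, by linarith⟩
    have hmemy : y - (n:ℝ)*(2*Real.pi) ∈ Set.Icc (-1:ℝ) (2*Real.pi+1) :=
      ⟨by linarith [hab.1, hab.2], by linarith [hab.1, hab.2]⟩
    have hdist : dist (x - (n:ℝ)*(2*Real.pi)) (y - (n:ℝ)*(2*Real.pi)) < ρ := by
      rw [Real.dist_eq, show x - (n:ℝ)*(2*Real.pi) - (y - (n:ℝ)*(2*Real.pi)) = x - y by ring]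
      exact lt_of_le_of_lt hxy (lt_of_lt_of_le hδρ (min_le_left _ _))
    have hres := hρ _ hmemx _ hmemy hdist
    rw [Real.dist_eq, hperiod.sub_int_mul_eq n, hperiod.sub_int_mul_eq n] at hres
    exact hres.le
  set r := rfun f M ε₂ with hrdef
  have hrcont : Continuous r := rfun_cont hM
  have hrper : ∀ ξ, r (ξ + 2*Real.pi) = r ξ := fun ξ => rfun_per hM hper ξ
  have hr0 : r 0 = 1 := rfun_zero hM hε₂p (by linarith) hf0
  have hrpi : r Real.pi = 0 := rfun_pi hM
  have hrapp : ∀ ξ, |r ξ - f ξ| ≤ 3*ε₂ := by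
    intro ξ
    have := approx hM hε₂p hper hfpi hUC ξ
    rw [← hrdef] at this
    linarith
  -- normalization
  set m : ℝ → ℝ := fun ξ => max 1 (Real.sqrt (r ξ^2 + r (ξ+Real.pi)^2)) with hmdef
  have hm1 : ∀ ξ, 1 ≤ m ξ := fun ξ => le_max_left _ _
  have hmpos : ∀ ξ, 0 < m ξ := fun ξ => lt_of_lt_of_le one_pos (hm1 ξ)
  have hmcont : Continuous m := by
    apply continuous_const.max
    exact ((hrcont.pow 2).add ((hrcont.comp (continuous_id.add continuous_const)).pow 2)).sqrt
  have hsq_bound : ∀ ξ, r ξ^2 ≤ f ξ^2 + 7*ε₂ := by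
    intro ξ
    have h1 := abs_le.1 (hrapp ξ)
    have h2 := abs_le.1 (hfabs ξ)
    nlinarith [h1.1, h1.2, h2.1, h2.2, hε₂1, hε₂p.le]
  have hmub : ∀ ξ, m ξ ≤ 1 + 15*ε₂ := by
    intro ξ
    apply max_le (by linarith)
    rw [Real.sqrt_le_iff]
    constructor
    · linarith
    · have b1 := hsq_bound ξ
      have b2 := hsq_bound (ξ + Real.pi)
      have b3 := hbd ξ
      have b4 : f (ξ + Real.pi) ^ 2 + f (ξ + Real.pi + Real.pi) ^ 2 ≤ 1 := hbd (ξ + Real.pi)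
      nlinarith [hε₂p.le, hε₂1]
  have hmlow : ∀ ξ, Real.sqrt (r ξ^2 + r (ξ+Real.pi)^2) ≤ m ξ := fun ξ => le_max_right _ _
  set g : ℝ → ℝ := fun ξ => r ξ / m ξ with hgdef
  have hgz : ∀ ξ, g ξ = 0 → r ξ = 0 := by
    intro ξ h
    rcases div_eq_zero_iff.1 h with h1 | h1
    · exact h1
    · exact absurd h1 (hmpos ξ).ne'
  have hmper : ∀ ξ, m (ξ + 2*Real.pi) = m ξ := by
    intro ξ
    simp only [hmdef]
    rw [hrper, show ξ + 2*Real.pi + Real.pi = (ξ + Real.pi) + 2*Real.pi by ring, hrper]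
  have hmpi : ∀ ξ, m (ξ + Real.pi) = m ξ := by
    intro ξ
    simp only [hmdef]
    rw [show ξ + Real.pi + Real.pi = ξ + 2*Real.pi by ring, hrper, add_comm (r (ξ+Real.pi)^2)]
  refine ⟨g, ?_, ?_, ?_, ?_, ?_, ?_, ?_, ?_⟩
  · exact hrcont.div hmcont (fun ξ => (hmpos ξ).ne')
  · intro ξ
    simp only [hgdef]
    rw [hrper, hmper]
  · have hm0 : m 0 = 1 := by
      simp only [hmdef]
      rw [hr0, zero_add, hrpi]
      norm_num
    simp only [hgdef]
    rw [hr0, hm0, div_one]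
  · -- approximation
    intro ξ
    have h1 := hrapp ξ
    have hub := hmub ξ
    have hl := hm1 ξ
    have hp := hmpos ξ
    have hrb : |r ξ| ≤ 2 := by
      have ha2 := abs_le.1 h1
      have hb2 := abs_le.1 (hfabs ξ)
      rw [abs_le]
      constructor <;> linarith [hε₂1, ha2.1, ha2.2, hb2.1, hb2.2]
    have hgr : |g ξ - r ξ| ≤ 30*ε₂ := by
      have he : g ξ - r ξ = r ξ * ((1 - m ξ)/ m ξ) := by
        simp only [hgdef]
        field_simp
      rw [he, abs_mul, abs_div, abs_of_nonpos (by linarith : 1 - m ξ ≤ 0),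
        abs_of_pos hp]
      have hq : (-(1 - m ξ))/ m ξ ≤ 15*ε₂ := by
        rw [div_le_iff₀ hp]
        nlinarith
      have hq0 : 0 ≤ (-(1 - m ξ))/ m ξ := div_nonneg (by linarith) hp.le
      nlinarith [abs_nonneg (r ξ)]
    have : |f ξ - g ξ| ≤ 33*ε₂ := by
      calc |f ξ - g ξ| = |(f ξ - r ξ) + (r ξ - g ξ)| := by ring_nf
        _ ≤ |f ξ - r ξ| + |r ξ - g ξ| := abs_add_le _ _
        _ ≤ 3*ε₂ + 30*ε₂ := by
            rw [abs_sub_comm (f ξ) (r ξ), abs_sub_comm (r ξ) (g ξ)]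
            exact add_le_add h1 hgr
        _ = 33*ε₂ := by ring
    linarith
  · -- pair constraint
    intro ξ
    simp only [hgdef]
    rw [div_pow, div_pow, hmpi, ← add_div]
    rw [div_le_one (by positivity)]
    have hS0 : (0:ℝ) ≤ r ξ^2 + r (ξ+Real.pi)^2 := by positivity
    have h1 := hmlow ξ
    have h2 := pow_le_pow_left₀ (Real.sqrt_nonneg _) h1 2
    rw [Real.sq_sqrt hS0] at h2
    exact h2
  · -- finiteness of zeros
    apply Set.Finite.subset
      ((Set.finite_Icc (0:ℤ) (2*M)).image (ypt M) |>.insert Real.pi)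
    rintro ξ ⟨⟨hξ0, hξ2π⟩, hz⟩
    rcases zchar hM hε₂p (hgz ξ hz) with ⟨a, ha⟩ | ⟨k, hk⟩
    · rcases lt_trichotomy a 0 with hc | hc | hc
      · exfalso
        have ha1 : a ≤ -1 := by omega
        have : (a:ℝ) ≤ -1 := by exact_mod_cast ha1
        nlinarith [ha, hξ0]
      · subst hc
        simp only [Int.cast_zero, mul_zero, add_zero] at ha
        rw [ha]
        exact Set.mem_insert _ _
      · exfalso
        have : (1:ℝ) ≤ (a:ℝ) := by exact_mod_cast hc
        nlinarith [ha, hξ2π]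
    · have hθ := th_bounds hM k
      rw [hk] at hξ0 hξ2π
      unfold ypt at hξ0 hξ2π
      have hk0 : 0 ≤ k := by
        have h2 : 0 ≤ (k:ℝ) + th M k := by nlinarith
        have h3 : (-1:ℝ) < (k:ℝ) := by linarith [hθ.2]
        have h4 : (-1:ℤ) < k := by exact_mod_cast h3
        omega
      have hk2M : k ≤ 2*(M:ℤ) := by
        have h2pi := two_pi_eq hM
        push_cast at h2pi
        have h5 : ((k:ℝ) + th M k) * del M < (2*(M:ℝ)) * del M := by
          linarith [hξ2π, h2pi]
        have h6 : (k:ℝ) + th M k < 2*(M:ℝ) := lt_of_mul_lt_mul_right h5 hδpos.le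
        have h7 : (k:ℝ) < 2*(M:ℝ) := by linarith [hθ.1]
        have h8 : k < 2*(M:ℤ) := by exact_mod_cast h7
        omega
      rw [hk]
      exact Set.mem_insert_of_mem _ (Set.mem_image_of_mem _ ⟨hk0, hk2M⟩)
  · -- no symmetric roots
    rintro ⟨α, h1, h2⟩
    have hr1 := hgz α h1
    have hr2 := hgz (α + Real.pi) h2
    rcases zchar hM hε₂p hr1 with ⟨a, ha⟩ | ⟨k, hk⟩ <;>
      rcases zchar hM hε₂p hr2 with ⟨a', ha'⟩ | ⟨j, hj⟩
    · rw [ha] at ha'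
      have hcast : (1 + 2*(a:ℝ)) = 2*(a':ℝ) := by
        have hπne := Real.pi_ne_zero
        have : Real.pi * (1 + 2*(a:ℝ)) = Real.pi * (2*(a':ℝ)) := by linear_combination ha'
        exact mul_left_cancel₀ hπne this
      have : (1 + 2*a : ℤ) = 2*a' := by exact_mod_cast hcast
      omega
    · rw [ha] at hj
      exact ypt_not_int_mul hM j (a+1) (by push_cast; linarith [hj])
    · rw [hk] at ha'
      exact ypt_not_int_mul hM k a' (by linarith [ha'])
    · rw [hk] at hj
      exact ypt_add_pi_ne hM k j hj
  · -- no nontrivial cycle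
    rintro ⟨n, b, ⟨hn, hinj, habs, hsq, hroot⟩, hne⟩
    have hiter := cycle_pow hn b hsq
    have hpow : ∀ j : Fin n, b j ^ (2^n) = b j := by
      intro j
      have h1 := hiter n j.1 j.2
      have h2 : (j.1 + n) % n = j.1 := by
        rw [Nat.add_mod_right]
        exact Nat.mod_eq_of_lt j.2
      have h3 : (⟨(j.1 + n) % n, Nat.mod_lt _ hn⟩ : Fin n) = j := Fin.ext h2
      rw [h3] at h1
      exact h1.symm
    have hL1 : 1 ≤ 2^n := Nat.one_le_two_pow
    have hone : ∀ j : Fin n, b j = 1 := by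
      intro j
      obtain ⟨β, hb, hz⟩ := hroot j
      have hrz : r (β + Real.pi) = 0 := hgz _ hz
      rcases zchar hM hε₂p hrz with ⟨a, ha⟩ | ⟨k, hk⟩
      · have hβ : β = (a:ℝ) * (2*Real.pi) := by linarith
        rw [hb, hβ]
        rw [show (((a:ℝ) * (2*Real.pi) : ℝ):ℂ) * Complex.I
          = (a:ℂ) * (2*Real.pi*Complex.I) by push_cast; ring]
        exact Complex.exp_int_mul_two_pi_mul_I a
      · exfalso
        set L : ℕ := 2^n - 1 with hLdef
        have hLpos : 0 < L := by
          have : 2 ≤ 2^n := by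
            calc 2 = 2^1 := by norm_num
              _ ≤ 2^n := Nat.pow_le_pow_right (by norm_num) hn
          omega
        have hbne : b j ≠ 0 := by
          intro h0
          have := habs j
          rw [h0] at this
          simp at this
        have hLpow : b j ^ L = 1 := by
          have h5 : b j ^ L * b j = 1 * b j := by
            rw [one_mul, ← pow_succ, hLdef, Nat.sub_add_cancel hL1]
            exact hpow j
          exact mul_right_cancel₀ hbne h5
        have hexp : Complex.exp ((L:ℂ) * ((β:ℂ) * Complex.I)) = 1 := by
          rw [Complex.exp_nat_mul, ← hb, hLpow]
        obtain ⟨mm, hmm⟩ := Complex.exp_eq_one_iff.1 hexp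
        have h6 : (((L:ℝ) * β : ℝ):ℂ) * Complex.I = ((2*Real.pi*(mm:ℝ) : ℝ):ℂ) * Complex.I := by
          push_cast
          push_cast at hmm
          linear_combination hmm
        have h7 := mul_right_cancel₀ Complex.I_ne_zero h6
        have hreal : (L:ℝ) * β = 2*Real.pi*(mm:ℝ) := by exact_mod_cast h7
        have hβy : β = ypt M k - Real.pi := by linarith
        rw [hβy] at hreal
        exact ypt_rat hM k mm L hLpos hreal
    apply hne
    apply Set.eq_singleton_iff_unique_mem.2
    constructor
    · exact ⟨⟨0, hn⟩, hone _⟩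
    · rintro x ⟨j, rfl⟩
      exact hone j
end

section
/- Let j ≥ 1 be an integer and let ξ ∈ ℝ be such that jξ/π is not an integer (so that sin((ξ − πk/j)/2) ≠ 0 for every integer k). Then ∑_{k=0}^{2j−1} t^j_k(ξ) = 1, where t^j_k(ξ) = ( sin(jξ) / (2j · sin((ξ − πk/j)/2)) )². -/
open scoped BigOperators
open Finset Polynomial


private lemma derivative_finset_prod {ι : Type*} [DecidableEq ι] (s : Finset ι)
    (f : ι → Polynomial ℂ) :
    Polynomial.derivative (∏ i ∈ s, f i)
      = ∑ i ∈ s, (∏ j ∈ s.erase i, f j) * Polynomial.derivative (f i) := by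
  induction s using Finset.induction_on with
  | empty => simp
  | @insert a s ha ih =>
    rw [Finset.prod_insert ha, Polynomial.derivative_mul, ih, Finset.sum_insert ha,
      Finset.erase_insert ha]
    have h2 : ∑ x ∈ s, (∏ j ∈ (insert a s).erase x, f j) * Polynomial.derivative (f x)
        = f a * ∑ x ∈ s, (∏ j ∈ s.erase x, f j) * Polynomial.derivative (f x) := by
      rw [Finset.mul_sum]
      refine Finset.sum_congr rfl fun i hi => ?_
      rw [Finset.erase_insert_of_ne (by rintro rfl; exact ha hi),
        Finset.prod_insert (fun hmem => ha (Finset.mem_of_mem_erase hmem))]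
      ring
    rw [h2]; ring

private lemma sin_sq_eq (z : ℂ) :
    Complex.sin z ^ 2
      = -(Complex.exp (z * Complex.I) ^ 2 - 1) ^ 2 / (4 * Complex.exp (z * Complex.I) ^ 2) := by
  have h := Complex.exp_ne_zero (z * Complex.I)
  have hs : Complex.sin z = (Complex.exp (-z * Complex.I) - Complex.exp (z * Complex.I)) * Complex.I / 2 := rfl
  rw [hs, neg_mul, Complex.exp_neg, div_pow, mul_pow, Complex.I_sq]
  field_simp
  ring


private lemma key_sum (n : ℕ) (hn : 2 ≤ n) {ζ : ℂ} (hζ : IsPrimitiveRoot ζ n)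
    (w : ℂ) (hw : w ^ n ≠ 1) :
    ∑ k ∈ Finset.range n, ζ ^ k / (w - ζ ^ k) ^ 2
      = (n : ℂ) ^ 2 * w ^ (n - 1) / (w ^ n - 1) ^ 2 := by
  have hn0 : 0 < n := by omega
  -- the n-th roots of unity are exactly the powers of ζ
  have himg : Polynomial.nthRootsFinset n (1 : ℂ) = (Finset.range n).image (ζ ^ ·) := by
    refine (Finset.eq_of_subset_of_card_le ?_ ?_).symm
    · intro x hx
      obtain ⟨k, hk, rfl⟩ := Finset.mem_image.mp hx
      exact (Polynomial.mem_nthRootsFinset hn0 (1 : ℂ)).mpr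
        (by rw [← pow_mul, mul_comm, pow_mul, hζ.pow_eq_one, one_pow])
    · rw [hζ.card_nthRootsFinset, Finset.card_image_of_injOn hζ.injOn_pow, Finset.card_range]
  have hP : (Polynomial.X : Polynomial ℂ) ^ n - 1
      = ∏ k ∈ Finset.range n, (Polynomial.X - Polynomial.C (ζ ^ k)) := by
    rw [Polynomial.X_pow_sub_one_eq_prod hn0 hζ, himg,
      Finset.prod_image (fun x hx y hy hxy => hζ.injOn_pow (by simpa using hx) (by simpa using hy) hxy)]
  -- first derivative
  have hd1 : (Polynomial.C (n : ℂ)) * Polynomial.X ^ (n - 1)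
      = ∑ k ∈ Finset.range n, ∏ j ∈ (Finset.range n).erase k,
          (Polynomial.X - Polynomial.C (ζ ^ j)) := by
    have := congrArg Polynomial.derivative hP
    rw [Polynomial.derivative_sub, Polynomial.derivative_one, Polynomial.derivative_X_pow,
      derivative_finset_prod] at this
    simp only [Polynomial.derivative_sub, Polynomial.derivative_X, Polynomial.derivative_C,
      sub_zero, mul_one, Nat.cast_one] at this
    simpa using this
  have hd2 : (Polynomial.C ((n : ℂ) * ((n : ℂ) - 1))) * Polynomial.X ^ (n - 2)
      = ∑ k ∈ Finset.range n, ∑ l ∈ ((Finset.range n).erase k),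
          ∏ j ∈ (((Finset.range n).erase k).erase l),
            (Polynomial.X - Polynomial.C (ζ ^ j)) := by
    have := congrArg Polynomial.derivative hd1
    rw [Polynomial.derivative_sum] at this
    rw [Polynomial.derivative_mul, Polynomial.derivative_C, Polynomial.derivative_X_pow] at this
    have h2 : ∀ k ∈ Finset.range n,
        Polynomial.derivative (∏ j ∈ (Finset.range n).erase k,
          (Polynomial.X - Polynomial.C (ζ ^ j)))
        = ∑ l ∈ ((Finset.range n).erase k),
            ∏ j ∈ (((Finset.range n).erase k).erase l),
              (Polynomial.X - Polynomial.C (ζ ^ j)) := by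
      intro k hk
      rw [derivative_finset_prod]
      simp only [Polynomial.derivative_sub, Polynomial.derivative_X, Polynomial.derivative_C,
        sub_zero, mul_one]
    rw [Finset.sum_congr rfl h2] at this
    rw [← this]
    have hcast : ((n - 1 : ℕ) : ℂ) = (n : ℂ) - 1 := by
      push_cast [Nat.cast_sub (by omega : 1 ≤ n)]; ring
    have hexp : n - 1 - 1 = n - 2 := by omega
    simp [hcast, hexp]
    ring
  -- evaluate at w
  have hprod : ∏ k ∈ Finset.range n, (w - ζ ^ k) = w ^ n - 1 := by
    have := congrArg (Polynomial.eval w) hP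
    simp only [Polynomial.eval_sub, Polynomial.eval_pow, Polynomial.eval_X, Polynomial.eval_one,
      Polynomial.eval_prod, Polynomial.eval_C] at this
    exact this.symm
  have hB : ∑ k ∈ Finset.range n, ∏ j ∈ (Finset.range n).erase k, (w - ζ ^ j)
      = (n : ℂ) * w ^ (n - 1) := by
    have := congrArg (Polynomial.eval w) hd1
    simp only [Polynomial.eval_mul, Polynomial.eval_C, Polynomial.eval_pow, Polynomial.eval_X,
      Polynomial.eval_finset_sum, Polynomial.eval_prod, Polynomial.eval_sub] at this
    exact this.symm
  have hC : ∑ k ∈ Finset.range n, ∑ l ∈ ((Finset.range n).erase k),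
      ∏ j ∈ (((Finset.range n).erase k).erase l), (w - ζ ^ j)
      = (n : ℂ) * ((n : ℂ) - 1) * w ^ (n - 2) := by
    have := congrArg (Polynomial.eval w) hd2
    simp only [Polynomial.eval_mul, Polynomial.eval_C, Polynomial.eval_pow, Polynomial.eval_X,
      Polynomial.eval_finset_sum, Polynomial.eval_prod, Polynomial.eval_sub] at this
    exact this.symm
  have hne : ∀ k : ℕ, w - ζ ^ k ≠ 0 := by
    intro k
    refine sub_ne_zero.mpr fun hwk => hw ?_
    rw [hwk, ← pow_mul, mul_comm, pow_mul, hζ.pow_eq_one, one_pow]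
  have hW : w ^ n - 1 ≠ 0 := sub_ne_zero.mpr hw
  have hE : ∀ k ∈ Finset.range n, ∏ j ∈ (Finset.range n).erase k, (w - ζ ^ j)
      = (w ^ n - 1) * (w - ζ ^ k)⁻¹ := by
    intro k hk
    rw [eq_comm, mul_inv_eq_iff_eq_mul₀ (hne k), mul_comm, Finset.mul_prod_erase (Finset.range n) (fun j => w - ζ ^ j) hk, hprod]
  have hE2 : ∀ k ∈ Finset.range n, ∀ l ∈ (Finset.range n).erase k,
      ∏ j ∈ ((Finset.range n).erase k).erase l, (w - ζ ^ j)
      = (w ^ n - 1) * ((w - ζ ^ k) * (w - ζ ^ l))⁻¹ := by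
    intro k hk l hl
    have h1 : (∏ j ∈ ((Finset.range n).erase k).erase l, (w - ζ ^ j)) * (w - ζ ^ l)
        = ∏ j ∈ (Finset.range n).erase k, (w - ζ ^ j) :=
      Finset.prod_erase_mul ((Finset.range n).erase k) (fun j => w - ζ ^ j) hl
    have h2 : (∏ j ∈ (Finset.range n).erase k, (w - ζ ^ j)) * (w - ζ ^ k) = w ^ n - 1 := by
      rw [Finset.prod_erase_mul (Finset.range n) (fun j => w - ζ ^ j) hk, hprod]
    rw [eq_comm, mul_inv_eq_iff_eq_mul₀ (mul_ne_zero (hne k) (hne l))]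
    rw [← h2, ← h1]; ring
  have hA : (w ^ n - 1) * ∑ k ∈ Finset.range n, (w - ζ ^ k)⁻¹ = (n : ℂ) * w ^ (n - 1) := by
    rw [Finset.mul_sum, Finset.sum_congr rfl (fun k hk => (hE k hk).symm), hB]
  have hD : (w ^ n - 1) * ∑ k ∈ Finset.range n, ∑ l ∈ (Finset.range n).erase k,
      ((w - ζ ^ k) * (w - ζ ^ l))⁻¹ = (n : ℂ) * ((n : ℂ) - 1) * w ^ (n - 2) := by
    rw [Finset.mul_sum, ← hC]
    refine Finset.sum_congr rfl fun k hk => ?_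
    rw [Finset.mul_sum, Finset.sum_congr rfl (fun l hl => (hE2 k hk l hl).symm)]
  set A := ∑ k ∈ Finset.range n, (w - ζ ^ k)⁻¹ with hAdef
  set D := ∑ k ∈ Finset.range n, ∑ l ∈ (Finset.range n).erase k,
      ((w - ζ ^ k) * (w - ζ ^ l))⁻¹ with hDdef
  have hsq : A ^ 2 = (∑ k ∈ Finset.range n, ((w - ζ ^ k)⁻¹) ^ 2) + D := by
    rw [hAdef, hDdef, sq, Finset.sum_mul_sum, ← Finset.sum_add_distrib]
    refine Finset.sum_congr rfl fun k hk => ?_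
    rw [← Finset.add_sum_erase _ _ hk]
    congr 1
    · rw [sq]
    · exact Finset.sum_congr rfl fun l hl => by rw [mul_inv]
  have hT : ∑ k ∈ Finset.range n, ζ ^ k / (w - ζ ^ k) ^ 2
      = w * (∑ k ∈ Finset.range n, ((w - ζ ^ k)⁻¹) ^ 2) - A := by
    rw [Finset.mul_sum, hAdef, ← Finset.sum_sub_distrib]
    refine Finset.sum_congr rfl fun k hk => ?_
    have h2 := hne k
    field_simp
    ring
  rw [hT, show (∑ k ∈ Finset.range n, ((w - ζ ^ k)⁻¹) ^ 2) = A ^ 2 - D by rw [hsq]; ring]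
  rw [eq_div_iff (pow_ne_zero 2 hW)]
  obtain ⟨p, rfl⟩ : ∃ p, n = p + 2 := ⟨n - 2, by omega⟩
  simp only [show p + 2 - 1 = p + 1 from rfl, show p + 2 - 2 = p from rfl] at hA hD ⊢
  push_cast at hA hD ⊢
  linear_combination (w * ((w ^ (p + 2) - 1) * A + ((p : ℂ) + 2) * w ^ (p + 1))) * hA
    - (w * (w ^ (p + 2) - 1)) * hD - (w ^ (p + 2) - 1) * hA

private lemma alg0 (w z : ℂ) (hz : z ≠ 0) (hw : w ≠ 0) :
    -(w * z⁻¹ - 1) ^ 2 / (4 * (w * z⁻¹)) = -(w - z) ^ 2 / (4 * (w * z)) := by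
  rw [div_eq_div_iff (by simp [hw, hz]) (by simp [hw, hz])]
  field_simp

private lemma alg1 (W w z c : ℂ) (hW : W ≠ 0) (hz : z ≠ 0) (hwz : w - z ≠ 0) (hc : c ≠ 0)
    (hw : w ≠ 0) :
    (-(W - 1) ^ 2 / (4 * W)) / ((2 * c) ^ 2 * (-(w - z) ^ 2 / (4 * (w * z))))
      = ((W - 1) ^ 2 * w / ((4 * c ^ 2) * W)) * (z / (w - z) ^ 2) := by
  rw [← mul_div_assoc, div_div_eq_mul_div, div_mul_eq_mul_div, div_div, div_mul_div_comm,
    div_eq_div_iff]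
  · ring
  · exact mul_ne_zero (by simp [hW]) (mul_ne_zero (by simp [hc])
      (by simpa using pow_ne_zero 2 hwz))
  · exact mul_ne_zero (by simp [hc, hW]) (by simpa using pow_ne_zero 2 hwz)

private lemma alg2 (W w u c N : ℂ) (hW : W ≠ 0) (hW1 : W - 1 ≠ 0) (hc : c ≠ 0)
    (hu : u * w = W) (hN : N ^ 2 = 4 * c ^ 2) :
    ((W - 1) ^ 2 * w / ((4 * c ^ 2) * W)) * (N ^ 2 * u / (W - 1) ^ 2) = 1 := by
  rw [div_mul_div_comm, div_eq_one_iff_eq (mul_ne_zero (mul_ne_zero (by simp [hc]) hW)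
    (by simpa using pow_ne_zero 2 hW1))]
  linear_combination ((W - 1) ^ 2 * w * u) * hN + (4 * c ^ 2 * (W - 1) ^ 2) * hu


theorem stmt2 (j : ℕ) (hj : 1 ≤ j) (ξ : ℝ)
    (h : ¬ ∃ n : ℤ, (j : ℝ) * ξ / Real.pi = n) :
    ∑ k ∈ Finset.range (2 * j),
        (Real.sin ((j : ℝ) * ξ) /
          (2 * (j : ℝ) * Real.sin ((ξ - Real.pi * k / j) / 2))) ^ 2 = 1 := by
  have hπ : (Real.pi : ℝ) ≠ 0 := Real.pi_ne_zero
  have hj0 : (j : ℂ) ≠ 0 := Nat.cast_ne_zero.mpr (by omega)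
  set n : ℕ := 2 * j with hn
  have hn2 : 2 ≤ n := by omega
  set ζ : ℂ := Complex.exp (2 * (Real.pi : ℂ) * Complex.I / (n : ℂ)) with hζdef
  have hζ : IsPrimitiveRoot ζ n := Complex.isPrimitiveRoot_exp n (by omega)
  set w : ℂ := Complex.exp ((ξ : ℂ) * Complex.I) with hwdef
  have hwn : w ^ n = Complex.exp ((n : ℂ) * ((ξ : ℂ) * Complex.I)) :=
    (Complex.exp_nat_mul _ n).symm
  have hW : w ^ n ≠ 1 := by
    intro heq
    rw [hwn] at heq
    obtain ⟨m, hm⟩ := Complex.exp_eq_one_iff.mp heq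
    apply h
    refine ⟨m, ?_⟩
    have h1 : ((n : ℂ) * (ξ : ℂ)) * Complex.I = ((m : ℂ) * (2 * (Real.pi : ℂ))) * Complex.I := by
      rw [← mul_assoc] at hm; rw [hm]; ring
    have h2 : (n : ℂ) * (ξ : ℂ) = (m : ℂ) * (2 * (Real.pi : ℂ)) :=
      mul_right_cancel₀ Complex.I_ne_zero h1
    have h3 : (n : ℝ) * ξ = (m : ℝ) * (2 * Real.pi) := by exact_mod_cast h2
    rw [hn] at h3
    push_cast at h3 ⊢
    field_simp
    linarith
  have hw0 : w ≠ 0 := Complex.exp_ne_zero _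
  have hwn0 : w ^ n ≠ 0 := pow_ne_zero _ hw0
  have hW1 : w ^ n - 1 ≠ 0 := sub_ne_zero.mpr hW
  have hz0 : ∀ k : ℕ, ζ ^ k ≠ 0 := fun k => pow_ne_zero _ (Complex.exp_ne_zero _)
  have hwz : ∀ k : ℕ, w - ζ ^ k ≠ 0 := by
    intro k
    refine sub_ne_zero.mpr fun hwk => hW ?_
    rw [hwk, ← pow_mul, mul_comm, pow_mul, hζ.pow_eq_one, one_pow]
  -- exponentials of the node angles
  have hek : ∀ k : ℕ,
      Complex.exp ((((ξ : ℂ) - (Real.pi : ℂ) * k / j) / 2) * Complex.I) ^ 2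
        = w * (ζ ^ k)⁻¹ := by
    intro k
    rw [sq, ← Complex.exp_add, hζdef, ← Complex.exp_nat_mul, ← Complex.exp_neg, hwdef,
      ← Complex.exp_add]
    congr 1
    have hnne : (n : ℂ) ≠ 0 := Nat.cast_ne_zero.mpr (by omega)
    rw [hn]
    push_cast
    field_simp
    ring
  have hjξ : Complex.exp (((j : ℂ) * (ξ : ℂ)) * Complex.I) ^ 2 = w ^ n := by
    rw [sq, ← Complex.exp_add, hwn, hn]
    congr 1
    push_cast
    ring
  -- the complex version of the sum
  have hmain : ∑ k ∈ Finset.range n,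
      (Complex.sin ((j : ℂ) * (ξ : ℂ)) /
        (2 * (j : ℂ) * Complex.sin (((ξ : ℂ) - (Real.pi : ℂ) * k / j) / 2))) ^ 2 = 1 := by
    have hterm : ∀ k ∈ Finset.range n,
        (Complex.sin ((j : ℂ) * (ξ : ℂ)) /
          (2 * (j : ℂ) * Complex.sin (((ξ : ℂ) - (Real.pi : ℂ) * k / j) / 2))) ^ 2
        = ((w ^ n - 1) ^ 2 * w / ((4 * (j : ℂ) ^ 2) * w ^ n)) * (ζ ^ k / (w - ζ ^ k) ^ 2) := by
      intro k _
      have h1 := hz0 k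
      have h2 := hwz k
      rw [div_pow, mul_pow, sin_sq_eq, sin_sq_eq, hjξ, hek k, alg0 w (ζ ^ k) h1 hw0]
      exact alg1 (w ^ n) w (ζ ^ k) (j : ℂ) hwn0 h1 h2 hj0 hw0
    rw [Finset.sum_congr rfl hterm, ← Finset.mul_sum, key_sum n hn2 hζ w hW]
    have hpow : w ^ (n - 1) * w = w ^ n := by
      rw [← pow_succ]
      congr 1
      omega
    have hN : ((n : ℕ) : ℂ) ^ 2 = 4 * (j : ℂ) ^ 2 := by rw [hn]; push_cast; ring
    exact alg2 (w ^ n) w (w ^ (n - 1)) (j : ℂ) ((n : ℕ) : ℂ) hwn0 hW1 hj0 hpow hN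
  exact_mod_cast hmain
end

section
/- Let j ≥ 1 be an integer and let v_0,…,v_{2j−1} be real numbers. For every ξ ∈ ℝ with jξ/π not an integer, ∑_{k=0}^{2j−1} v_k · t^j_k(ξ) = ∑_{m=−(2j−1)}^{2j−1} (1 − |m|/(2j)) · ṽ(m) · e^{imξ}, where ṽ(m) = (1/(2j)) · ∑_{k=0}^{2j−1} v_k · e^{−i·m·πk/j} is the inverse discrete Fourier transform of the sample values. -/
open scoped BigOperators

open Finset Complex

lemma shift_sum (z : ℂ) (hz : z ≠ 0) (a : ℤ) (N : ℕ) :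
    ∑ m ∈ Finset.Icc a (a + N - 1), z ^ m = ∑ k ∈ Finset.range N, z ^ (a + (k : ℤ)) := by
  induction N with
  | zero => simp
  | succ N ih =>
    rw [Finset.sum_range_succ, ← ih]
    have h1 : a + (N + 1 : ℕ) - 1 = a + N := by push_cast; ring
    have h2 : Finset.Icc a (a + N) = insert (a + N) (Finset.Icc a (a + N - 1)) := by
      ext x; simp [Finset.mem_Icc, Finset.mem_insert]; omega
    rw [h1, h2, Finset.sum_insert (by simp [Finset.mem_Icc])]
    ring

lemma conv (z : ℂ) (hz : z ≠ 0) (n : ℕ) :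
    ∑ m ∈ Finset.Icc (-(n : ℤ) + 1) ((n : ℤ) - 1), (((n : ℤ) - |m| : ℤ) : ℂ) * z ^ m
      = (∑ k ∈ Finset.range n, z ^ (k : ℤ)) * (∑ k ∈ Finset.range n, z ^ (-(k : ℤ))) := by
  induction n with
  | zero => simp
  | succ n ih =>
    rw [Finset.sum_range_succ, Finset.sum_range_succ, add_mul, mul_add, mul_add, ← ih]
    have key : ∑ m ∈ Finset.Icc (-((n+1 : ℕ) : ℤ) + 1) (((n+1 : ℕ) : ℤ) - 1),
        ((((n+1 : ℕ) : ℤ) - |m| : ℤ) : ℂ) * z ^ m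
        = (∑ m ∈ Finset.Icc (-(n : ℤ) + 1) ((n : ℤ) - 1), (((n : ℤ) - |m| : ℤ) : ℂ) * z ^ m)
          + ∑ m ∈ Finset.Icc (-(n : ℤ)) ((n : ℤ)), z ^ m := by
      have e1 : (-((n+1 : ℕ) : ℤ) + 1) = -(n : ℤ) := by push_cast; ring
      have e2 : (((n+1 : ℕ) : ℤ) - 1) = (n : ℤ) := by push_cast; ring
      rw [e1, e2]
      have split : ∀ m ∈ Finset.Icc (-(n : ℤ)) (n : ℤ),
          ((((n+1 : ℕ) : ℤ) - |m| : ℤ) : ℂ) * z ^ m = (((n : ℤ) - |m| : ℤ) : ℂ) * z ^ m + z ^ m := by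
        intro m hm; push_cast; ring
      rw [Finset.sum_congr rfl split, Finset.sum_add_distrib]
      congr 1
      symm
      apply Finset.sum_subset
      · apply Finset.Icc_subset_Icc <;> omega
      · intro m hm hnot
        simp only [Finset.mem_Icc] at hm hnot
        have : |m| = (n : ℤ) := by
          rcases abs_cases m with ⟨h1, h2⟩ | ⟨h1, h2⟩ <;> omega
        simp [this]
    rw [key]
    have B : ∑ m ∈ Finset.Icc (-(n : ℤ)) ((n : ℤ)), z ^ m
        = (∑ k ∈ Finset.range n, z ^ (k : ℤ)) * z ^ (-(n : ℤ))
          + z ^ (n : ℤ) * (∑ k ∈ Finset.range n, z ^ (-(k : ℤ)))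
          + z ^ (n : ℤ) * z ^ (-(n : ℤ)) := by
      have hA : (∑ k ∈ Finset.range n, z ^ (k : ℤ)) * z ^ (-(n : ℤ))
          = ∑ m ∈ Finset.Icc (-(n:ℤ)) (-(n:ℤ) + n - 1), z ^ m := by
        rw [shift_sum z hz, Finset.sum_mul]
        apply Finset.sum_congr rfl
        intro k hk
        rw [← zpow_add₀ hz]; ring_nf
      have hB : z ^ (n : ℤ) * (∑ k ∈ Finset.range n, z ^ (-(k : ℤ)))
          = ∑ m ∈ Finset.Icc (1 : ℤ) (1 + n - 1), z ^ m := by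
        rw [shift_sum z hz, Finset.mul_sum, ← Finset.sum_range_reflect]
        apply Finset.sum_congr rfl
        intro k hk
        simp only [Finset.mem_range] at hk
        rw [← zpow_add₀ hz]
        congr 1
        push_cast
        omega
      rw [hA, hB, ← zpow_add₀ hz, add_neg_cancel]
      have hsplit : Finset.Icc (-(n:ℤ)) (n:ℤ)
          = Finset.Icc (-(n:ℤ)) (-(n:ℤ) + n - 1) ∪ ({(0:ℤ)} ∪ Finset.Icc (1:ℤ) (1 + n - 1)) := by
        ext x; simp [Finset.mem_Icc]; omega
      rw [hsplit, Finset.sum_union, Finset.sum_union]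
      · simp; ring
      · simp [Finset.disjoint_left, Finset.mem_Icc]
      · simp [Finset.disjoint_left, Finset.mem_Icc]
        intro a h1 h2
        exact ⟨by omega, by omega⟩
    rw [B]; ring

lemma fejer (θ : ℝ) (n : ℕ) :
    (∑ k ∈ Finset.range n, Complex.exp (θ * Complex.I) ^ (k : ℤ)) *
      (∑ k ∈ Finset.range n, Complex.exp (θ * Complex.I) ^ (-(k : ℤ))) *
      (4 * (Real.sin (θ / 2) : ℂ) ^ 2) = 4 * (Real.sin ((n : ℝ) * θ / 2) : ℂ) ^ 2 := by
  set z := Complex.exp (θ * Complex.I) with hzdef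
  have hz : z ≠ 0 := Complex.exp_ne_zero _
  have hA : (∑ k ∈ Finset.range n, z ^ (k : ℤ)) * (z - 1) = z ^ (n : ℤ) - 1 := by
    simpa [zpow_natCast] using geom_sum_mul z n
  have hB : (∑ k ∈ Finset.range n, z ^ (-(k : ℤ))) * (z⁻¹ - 1) = z ^ (-(n : ℤ)) - 1 := by
    simpa [zpow_neg, zpow_natCast, inv_pow] using geom_sum_mul z⁻¹ n
  have hcos : ∀ x : ℝ, Complex.exp (x * Complex.I) + Complex.exp (-(x * Complex.I))
      = 2 - 4 * (Real.sin (x / 2) : ℂ) ^ 2 := by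
    intro x
    rw [show -((x : ℂ) * Complex.I) = (-x) * Complex.I by ring]
    rw [show (Real.sin (x / 2) : ℂ) = Complex.sin ((x : ℂ) / 2) by push_cast; ring]
    have h2 : Complex.cos (x : ℂ) = 1 - 2 * Complex.sin ((x : ℂ) / 2) ^ 2 := by
      conv_lhs => rw [show (x : ℂ) = 2 * ((x : ℂ) / 2) by ring]
      rw [Complex.cos_two_mul']
      linear_combination Complex.sin_sq_add_cos_sq ((x : ℂ) / 2)
    linear_combination 2 * h2 - Complex.two_cos (x : ℂ)
  have e1 : (z - 1) * (z⁻¹ - 1) = 4 * (Real.sin (θ / 2) : ℂ) ^ 2 := by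
    have hinv : z⁻¹ = Complex.exp (-(θ * Complex.I)) := by
      rw [hzdef, ← Complex.exp_neg]
    have := hcos θ
    rw [hinv]
    have hmul : z * z⁻¹ = 1 := mul_inv_cancel₀ hz
    rw [hinv] at hmul
    linear_combination hmul - this
  have e2 : (z ^ (n : ℤ) - 1) * (z ^ (-(n : ℤ)) - 1)
      = 4 * (Real.sin ((n : ℝ) * θ / 2) : ℂ) ^ 2 := by
    have hn1 : z ^ (n : ℤ) = Complex.exp (((n : ℝ) * θ : ℝ) * Complex.I) := by
      rw [hzdef, ← Complex.exp_int_mul]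
      congr 1
      push_cast
      ring
    have hn2 : z ^ (-(n : ℤ)) = Complex.exp (-(((n : ℝ) * θ : ℝ) * Complex.I)) := by
      rw [zpow_neg, hn1, ← Complex.exp_neg]
    have hc := hcos ((n : ℝ) * θ)
    have hmul : z ^ (n : ℤ) * z ^ (-(n : ℤ)) = 1 := by
      rw [← zpow_add₀ hz]; simp
    rw [hn1, hn2] at hmul ⊢
    linear_combination hmul - hc
  calc (∑ k ∈ Finset.range n, z ^ (k : ℤ)) * (∑ k ∈ Finset.range n, z ^ (-(k : ℤ))) *
        (4 * (Real.sin (θ / 2) : ℂ) ^ 2)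
      = ((∑ k ∈ Finset.range n, z ^ (k : ℤ)) * (z - 1)) *
          ((∑ k ∈ Finset.range n, z ^ (-(k : ℤ))) * (z⁻¹ - 1)) := by rw [← e1]; ring
    _ = (z ^ (n : ℤ) - 1) * (z ^ (-(n : ℤ)) - 1) := by rw [hA, hB]
    _ = _ := e2

theorem stmt8 (j : ℕ) (hj : 1 ≤ j) (v : ℕ → ℝ) (ξ : ℝ)
    (h : ¬ ∃ n : ℤ, (j : ℝ) * ξ / Real.pi = n) :
    ((∑ k ∈ Finset.range (2 * j),
        v k * (Real.sin ((j : ℝ) * ξ) /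
          (2 * (j : ℝ) * Real.sin ((ξ - Real.pi * k / j) / 2))) ^ 2 : ℝ) : ℂ) =
      ∑ m ∈ Finset.Icc (-(2 * (j : ℤ) - 1)) (2 * (j : ℤ) - 1),
        (1 - ((|m| : ℤ) : ℂ) / (2 * j)) *
          ((1 / (2 * (j : ℂ))) * ∑ k ∈ Finset.range (2 * j),
            (v k : ℂ) * Complex.exp (-((m : ℂ) * (Real.pi * k / j)) * Complex.I)) *
          Complex.exp ((m : ℂ) * ξ * Complex.I) := by
  have hj0 : (j : ℝ) ≠ 0 := by positivity
  have hjC : (j : ℂ) ≠ 0 := by exact_mod_cast Nat.cast_ne_zero.mpr (by omega)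
  simp only [Finset.mul_sum, Finset.sum_mul]
  rw [Finset.sum_comm, Complex.ofReal_sum]
  apply Finset.sum_congr rfl
  intro k hk
  set θ : ℝ := ξ - Real.pi * k / j with hθ
  have hs : Real.sin (θ / 2) ≠ 0 := by
    intro hzero
    rcases Real.sin_eq_zero_iff.mp hzero with ⟨l, hl⟩
    apply h
    refine ⟨(k : ℤ) + 2 * l * j, ?_⟩
    have hpi : Real.pi ≠ 0 := Real.pi_ne_zero
    have hξ : ξ = Real.pi * k / j + 2 * l * Real.pi := by
      rw [hθ] at hl
      field_simp at hl ⊢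
      linarith
    rw [hξ]
    field_simp
    push_cast
    ring
  have hsC : (Real.sin (θ / 2) : ℂ) ≠ 0 := by exact_mod_cast hs
  set z : ℂ := Complex.exp ((θ : ℝ) * Complex.I) with hz
  have hz0 : z ≠ 0 := Complex.exp_ne_zero _
  have hzm : ∀ m : ℤ, z ^ m = Complex.exp (-((m : ℂ) * (Real.pi * k / j)) * Complex.I) *
      Complex.exp ((m : ℂ) * ξ * Complex.I) := by
    intro m
    rw [hz, ← Complex.exp_int_mul, ← Complex.exp_add]
    congr 1
    push_cast [hθ]
    ring
  have hf := fejer θ (2 * j)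
  rw [← hz] at hf
  have hsin : Real.sin (((2 * j : ℕ) : ℝ) * θ / 2) ^ 2 = Real.sin ((j : ℝ) * ξ) ^ 2 := by
    have harg : ((2 * j : ℕ) : ℝ) * θ / 2 = (j : ℝ) * ξ - (k : ℝ) * Real.pi := by
      rw [hθ]
      push_cast
      field_simp
    rw [harg, Real.sin_sub]
    have hsk : Real.sin ((k : ℝ) * Real.pi) = 0 := Real.sin_nat_mul_pi k
    have hcos : Real.cos ((k : ℝ) * Real.pi) ^ 2 = 1 := by
      have := Real.sin_sq_add_cos_sq ((k : ℝ) * Real.pi)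
      rw [hsk] at this
      linarith
    rw [hsk]
    ring_nf
    nlinarith [hcos]
  have hABval : (∑ i ∈ Finset.range (2 * j), z ^ (i : ℤ)) *
      (∑ i ∈ Finset.range (2 * j), z ^ (-(i : ℤ)))
      = 4 * (Real.sin ((j : ℝ) * ξ) : ℂ) ^ 2 / (4 * (Real.sin (θ / 2) : ℂ) ^ 2) := by
    rw [eq_div_iff (mul_ne_zero (by norm_num) (pow_ne_zero 2 hsC)), hf]
    exact_mod_cast congrArg (fun t : ℝ => ((4 * t : ℝ) : ℂ)) hsin
  have hbounds : Finset.Icc (-(2 * (j : ℤ) - 1)) (2 * (j : ℤ) - 1)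
      = Finset.Icc (-((2 * j : ℕ) : ℤ) + 1) (((2 * j : ℕ) : ℤ) - 1) := by
    congr 1 <;> push_cast <;> ring
  rw [hbounds]
  trans ((v k : ℂ) / (4 * (j : ℂ) ^ 2) *
      ∑ m ∈ Finset.Icc (-((2 * j : ℕ) : ℤ) + 1) (((2 * j : ℕ) : ℤ) - 1),
        ((((2 * j : ℕ) : ℤ) - |m| : ℤ) : ℂ) * z ^ m)
  · rw [conv z hz0 (2 * j), hABval]
    push_cast
    field_simp
    ring
  · rw [Finset.mul_sum]
    apply Finset.sum_congr rfl
    intro m hm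
    rw [hzm m]
    push_cast
    field_simp
    ring
end

section
/- Let j ≥ 1 be an integer, let v_0,…,v_{2j−1} be real numbers, extended 2j-periodically in the index, and define the trigonometric polynomial H(ξ) = ∑_{m=−(2j−1)}^{2j−1} (1 − |m|/(2j)) · ṽ(m) · e^{imξ}, where ṽ(m) = (1/(2j)) · ∑_{k=0}^{2j−1} v_k · e^{−i·m·πk/j}. Then for every k ∈ {0,…,2j−1}: H(πk/j) = v_k and H'(πk/j) = 0. -/
open scoped BigOperators

lemma Ico_split (f : ℤ → ℂ) {a b c : ℤ} (hab : a ≤ b) (hbc : b ≤ c) :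
    ∑ m ∈ Finset.Ico a c, f m = ∑ m ∈ Finset.Ico a b, f m + ∑ m ∈ Finset.Ico b c, f m := by
  rw [← Finset.Ico_union_Ico_eq_Ico hab hbc,
    Finset.sum_union (Finset.Ico_disjoint_Ico_consecutive a b c)]

lemma Ico_single (f : ℤ → ℂ) (a : ℤ) : ∑ m ∈ Finset.Ico a (a+1), f m = f a := by
  have : Finset.Ico a (a+1) = {a} := by ext x; simp; omega
  rw [this, Finset.sum_singleton]

lemma geo_int (z : ℂ) (N : ℕ) : ∑ m ∈ Finset.Ico (0:ℤ) (N:ℤ), z ^ m = ∑ a ∈ Finset.range N, z ^ a := by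
  induction N with
  | zero => simp
  | succ n ih =>
    rw [Finset.sum_range_succ, ← ih,
      show ((n+1:ℕ):ℤ) = (n:ℤ) + 1 by push_cast; ring,
      Ico_split _ (by positivity) (by omega : (n:ℤ) ≤ (n:ℤ)+1), Ico_single]
    norm_num [zpow_natCast]

lemma split_sum (N : ℕ) (hN : 1 ≤ N) (f : ℤ → ℂ) :
    ∑ m ∈ Finset.Icc (-(N:ℤ) + 1) ((N:ℤ) - 1), f m
      = f 0 + ∑ m ∈ Finset.Ico (1:ℤ) (N:ℤ), (f m + f (m - N)) := by
  have hN1 : (1:ℤ) ≤ (N:ℤ) := by exact_mod_cast hN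
  have h1 : Finset.Icc (-(N:ℤ)+1) ((N:ℤ)-1) = Finset.Ico (-(N:ℤ)+1) (N:ℤ) := by
    ext x; simp [Finset.mem_Icc, Finset.mem_Ico]
  rw [h1, Ico_split f (show (-(N:ℤ)+1) ≤ 0 by omega) (show (0:ℤ) ≤ N by omega)]
  have h2 : ∑ m ∈ Finset.Ico (-(N:ℤ)+1) 0, f m = ∑ m ∈ Finset.Ico (1:ℤ) (N:ℤ), f (m - N) := by
    rw [show (-(N:ℤ)+1) = 1 + -N by ring, show (0:ℤ) = N + -N by ring,
      ← Finset.map_add_right_Ico, Finset.sum_map]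
    simp [sub_eq_add_neg]
  have h3 : ∑ m ∈ Finset.Ico (0:ℤ) (N:ℤ), f m = f 0 + ∑ m ∈ Finset.Ico (1:ℤ) (N:ℤ), f m := by
    rw [Ico_split f (show (0:ℤ) ≤ 1 by omega) hN1, show (1:ℤ) = 0 + 1 by ring, Ico_single]
  rw [h2, h3, Finset.sum_add_distrib]; ring
lemma fejer_sum (N : ℕ) (hN : 1 ≤ N) (z : ℂ) (hz : z ^ (N:ℤ) = 1) :
    ∑ m ∈ Finset.Icc (-(N:ℤ) + 1) ((N:ℤ) - 1), ((N:ℂ) - ((|m| : ℤ) : ℂ)) * z ^ m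
      = (N:ℂ) * ∑ a ∈ Finset.range N, z ^ a := by
  have hz0 : z ≠ 0 := by
    intro h; rw [h, zero_zpow _ (Int.natCast_ne_zero.mpr (by omega))] at hz; simp at hz
  rw [split_sum N hN]
  have hterm : ∀ m ∈ Finset.Ico (1:ℤ) (N:ℤ),
      (((N:ℂ) - ((|m| : ℤ) : ℂ)) * z ^ m + ((N:ℂ) - ((|m - N| : ℤ) : ℂ)) * z ^ (m - N))
        = (N:ℂ) * z ^ m := by
    intro m hm
    rw [Finset.mem_Ico] at hm
    rw [abs_of_pos (by omega), abs_of_nonpos (by omega),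
      zpow_sub₀ hz0, hz, div_one]
    push_cast; ring
  rw [Finset.sum_congr rfl hterm, ← geo_int, Finset.mul_sum,
    Ico_split (fun m => (N:ℂ) * z ^ m) (show (0:ℤ) ≤ 1 by omega) (show (1:ℤ) ≤ N by exact_mod_cast hN)]
  have : Finset.Ico (0:ℤ) 1 = {0} := by ext x; simp; omega
  rw [this, Finset.sum_singleton]
  simp

lemma fejer_deriv_sum (N : ℕ) (hN : 1 ≤ N) (z : ℂ) (hz : z ^ (N:ℤ) = 1) :
    ∑ m ∈ Finset.Icc (-(N:ℤ) + 1) ((N:ℤ) - 1), (m:ℂ) * ((N:ℂ) - ((|m| : ℤ) : ℂ)) * z ^ m = 0 := by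
  have hz0 : z ≠ 0 := by
    intro h; rw [h, zero_zpow _ (Int.natCast_ne_zero.mpr (by omega))] at hz; simp at hz
  rw [split_sum N hN]
  have hterm : ∀ m ∈ Finset.Ico (1:ℤ) (N:ℤ),
      ((m:ℂ) * ((N:ℂ) - ((|m| : ℤ) : ℂ)) * z ^ m
        + ((m - N : ℤ):ℂ) * ((N:ℂ) - ((|m - N| : ℤ) : ℂ)) * z ^ (m - N)) = 0 := by
    intro m hm
    rw [Finset.mem_Ico] at hm
    rw [abs_of_pos (by omega), abs_of_nonpos (by omega),
      zpow_sub₀ hz0, hz, div_one]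
    push_cast; ring
  rw [Finset.sum_congr rfl hterm]
  simp
lemma zpow_exp (j : ℕ) (n m : ℤ) :
    (Complex.exp ((n:ℂ) * Real.pi / j * Complex.I)) ^ m
      = Complex.exp (((m * n : ℤ):ℂ) * Real.pi / j * Complex.I) := by
  rw [← Complex.exp_int_mul]; congr 1; push_cast; ring

lemma root_one (j : ℕ) (hj : 1 ≤ j) (n : ℤ) :
    (Complex.exp ((n:ℂ) * Real.pi / j * Complex.I)) ^ ((2*j : ℕ):ℤ) = 1 := by
  have hj0 : (j:ℂ) ≠ 0 := by exact_mod_cast (by omega : j ≠ 0)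
  rw [zpow_exp]
  rw [show ((((2*j:ℕ):ℤ) * n : ℤ):ℂ) * Real.pi / j * Complex.I
      = (n:ℂ) * (2 * Real.pi * Complex.I) by push_cast; field_simp]
  exact Complex.exp_int_mul_two_pi_mul_I n

lemma root_ne_one (j : ℕ) (hj : 1 ≤ j) (n : ℤ) (hn : n ≠ 0) (hn2 : |n| < 2*j) :
    Complex.exp ((n:ℂ) * Real.pi / j * Complex.I) ≠ 1 := by
  have hj0 : (j:ℂ) ≠ 0 := by exact_mod_cast (by omega : j ≠ 0)
  have hπ : (Real.pi:ℂ) ≠ 0 := by exact_mod_cast Real.pi_ne_zero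
  intro h
  rw [Complex.exp_eq_one_iff] at h
  obtain ⟨t, ht⟩ := h
  have hC : (n:ℂ) = ((2*t*j : ℤ):ℂ) := by
    push_cast
    field_simp at ht
    have h2 : (n:ℂ) * (Real.pi * Complex.I) = 2*t*j * (Real.pi * Complex.I) := by
      linear_combination ht * (Real.pi * Complex.I)
    exact mul_right_cancel₀ (mul_ne_zero hπ Complex.I_ne_zero) h2
  have hZ : n = 2*t*j := by exact_mod_cast hC
  have ht0 : t ≠ 0 := by rintro rfl; simp at hZ; omega
  have h1t : (1:ℤ) ≤ |t| := Int.one_le_abs ht0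
  have : (2*j:ℤ) ≤ |n| := by
    rw [hZ, abs_mul, abs_mul]
    have : |(2:ℤ)| = 2 := by norm_num
    rw [this, (abs_of_nonneg (by positivity : (0:ℤ) ≤ (j:ℤ)))]
    nlinarith [abs_nonneg t, (by exact_mod_cast hj : (1:ℤ) ≤ (j:ℤ))]
  omega
theorem stmt9 (j : ℕ) (hj : 1 ≤ j) (v : ℕ → ℝ)
    (hvper : ∀ k : ℕ, v (k + 2 * j) = v k)
    (H : ℝ → ℂ)
    (hH : ∀ ξ : ℝ, H ξ =
      ∑ m ∈ Finset.Icc (-(2 * (j : ℤ) - 1)) (2 * (j : ℤ) - 1),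
        (1 - ((|m| : ℤ) : ℂ) / (2 * j)) *
          ((1 / (2 * (j : ℂ))) * ∑ k ∈ Finset.range (2 * j),
            (v k : ℂ) * Complex.exp (-((m : ℂ) * (Real.pi * k / j)) * Complex.I)) *
          Complex.exp ((m : ℂ) * ξ * Complex.I)) :
    ∀ k < 2 * j, H (Real.pi * k / j) = (v k : ℂ) ∧
      HasDerivAt H 0 (Real.pi * k / j) := by
  intro k hk
  set N : ℕ := 2 * j with hNdef
  have hN : 1 ≤ N := by omega
  have hjC : (j:ℂ) ≠ 0 := by exact_mod_cast (by omega : j ≠ 0)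
  have hNC : ((N:ℕ):ℂ) ≠ 0 := by exact_mod_cast (by omega : N ≠ 0)
  set ξ : ℝ := Real.pi * k / j with hξdef
  set z : ℤ → ℂ := fun n => Complex.exp ((n:ℂ) * Real.pi / j * Complex.I) with hzdef
  set S : Finset ℤ := Finset.Icc (-(2 * (j : ℤ) - 1)) (2 * (j : ℤ) - 1) with hSdef
  have hS : S = Finset.Icc (-(N:ℤ) + 1) ((N:ℤ) - 1) := by
    rw [hSdef]; congr 1 <;> omega
  -- the exponential product identity
  have Eid : ∀ (m : ℤ) (l : ℕ),
      Complex.exp (-((m : ℂ) * (Real.pi * l / j)) * Complex.I) *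
        Complex.exp ((m : ℂ) * (ξ:ℝ) * Complex.I) = (z ((k:ℤ) - l)) ^ m := by
    intro m l
    rw [hzdef, zpow_exp, ← Complex.exp_add]
    congr 1
    rw [hξdef]
    push_cast
    ring
  -- generic swap lemma
  have swap : ∀ F : ℤ → ℂ,
      ∑ m ∈ S, ((1 / (2 * (j : ℂ))) * ∑ l ∈ Finset.range N,
          (v l : ℂ) * Complex.exp (-((m : ℂ) * (Real.pi * l / j)) * Complex.I)) *
        (F m * Complex.exp ((m : ℂ) * (ξ:ℝ) * Complex.I))
      = ∑ l ∈ Finset.range N, (1 / (2 * (j : ℂ))) *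
          ((v l : ℂ) * ∑ m ∈ S, F m * (z ((k:ℤ) - l)) ^ m) := by
    intro F
    calc ∑ m ∈ S, ((1 / (2 * (j : ℂ))) * ∑ l ∈ Finset.range N,
          (v l : ℂ) * Complex.exp (-((m : ℂ) * (Real.pi * l / j)) * Complex.I)) *
        (F m * Complex.exp ((m : ℂ) * (ξ:ℝ) * Complex.I))
        = ∑ m ∈ S, ∑ l ∈ Finset.range N,
            (1 / (2 * (j : ℂ))) * ((v l : ℂ) * (F m * (z ((k:ℤ) - l)) ^ m)) := by
          refine Finset.sum_congr rfl fun m _ => ?_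
          rw [Finset.mul_sum, Finset.sum_mul]
          refine Finset.sum_congr rfl fun l _ => ?_
          rw [← Eid m l]; ring
      _ = ∑ l ∈ Finset.range N, ∑ m ∈ S,
            (1 / (2 * (j : ℂ))) * ((v l : ℂ) * (F m * (z ((k:ℤ) - l)) ^ m)) :=
          Finset.sum_comm
      _ = ∑ l ∈ Finset.range N, (1 / (2 * (j : ℂ))) *
            ((v l : ℂ) * ∑ m ∈ S, F m * (z ((k:ℤ) - l)) ^ m) := by
          refine Finset.sum_congr rfl fun l _ => ?_
          rw [Finset.mul_sum, Finset.mul_sum]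
  -- root of unity facts
  have hroot : ∀ l : ℕ, (z ((k:ℤ) - l)) ^ ((N:ℕ):ℤ) = 1 := by
    intro l
    simp only [hzdef]
    exact root_one j hj _
  have hgeom : ∀ l ∈ Finset.range N, l ≠ k →
      ∑ a ∈ Finset.range N, (z ((k:ℤ) - l)) ^ a = 0 := by
    intro l hl hlk
    rw [Finset.mem_range] at hl
    have hz1 : z ((k:ℤ) - l) ≠ 1 := by
      simp only [hzdef]
      refine root_ne_one j hj _ (by omega) (abs_lt.mpr ⟨by omega, by omega⟩)
    rw [geom_sum_eq hz1]
    have hN1 : (z ((k:ℤ)-l)) ^ (N:ℕ) = 1 := by rw [← zpow_natCast]; exact hroot l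
    rw [hN1]; simp
  have hgeom1 : ∑ a ∈ Finset.range N, (z ((k:ℤ) - (k:ℕ))) ^ a = (N:ℂ) := by
    rw [sub_self]
    simp [hzdef]
  -- the value part
  have hNc : ((N:ℕ):ℂ) = 2*(j:ℂ) := by rw [hNdef]; push_cast; ring
  have inner1 : ∀ l : ℕ, ∑ m ∈ S, (1 - ((|m| : ℤ) : ℂ) / (2 * j)) * (z ((k:ℤ)-l))^m
      = ∑ a ∈ Finset.range N, (z ((k:ℤ)-l))^a := by
    intro l
    rw [hS]
    have hterm : ∀ m ∈ Finset.Icc (-(N:ℤ)+1) ((N:ℤ)-1),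
        (1 - ((|m| : ℤ) : ℂ) / (2 * j)) * (z ((k:ℤ)-l))^m
          = (1/((N:ℕ):ℂ)) * ((((N:ℕ):ℂ) - ((|m| : ℤ) : ℂ)) * (z ((k:ℤ)-l))^m) := by
      intro m _
      rw [hNc]
      field_simp
    rw [Finset.sum_congr rfl hterm, ← Finset.mul_sum, fejer_sum N hN _ (hroot l), ← mul_assoc]
    field_simp
  have hval : H ξ = (v k : ℂ) := by
    rw [hH ξ]
    have step1 : ∀ m ∈ S, (1 - ((|m| : ℤ) : ℂ) / (2 * j)) *
        ((1/(2*(j:ℂ))) * ∑ l ∈ Finset.range N,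
          (v l : ℂ) * Complex.exp (-((m : ℂ) * (Real.pi * l / j)) * Complex.I)) *
        Complex.exp ((m : ℂ) * (ξ:ℝ) * Complex.I)
        = ((1/(2*(j:ℂ))) * ∑ l ∈ Finset.range N,
          (v l : ℂ) * Complex.exp (-((m : ℂ) * (Real.pi * l / j)) * Complex.I)) *
        ((1 - ((|m| : ℤ) : ℂ) / (2 * j)) * Complex.exp ((m : ℂ) * (ξ:ℝ) * Complex.I)) := by
      intro m _; ring
    rw [Finset.sum_congr rfl step1, swap (fun m => 1 - ((|m| : ℤ) : ℂ) / (2 * j))]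
    have step2 : ∀ l ∈ Finset.range N, (1 / (2 * (j : ℂ))) *
        ((v l : ℂ) * ∑ m ∈ S, (1 - ((|m| : ℤ) : ℂ) / (2 * j)) * (z ((k:ℤ) - l)) ^ m)
        = (1 / (2 * (j : ℂ))) * ((v l : ℂ) * ∑ a ∈ Finset.range N, (z ((k:ℤ)-l))^a) := by
      intro l _; rw [inner1 l]
    rw [Finset.sum_congr rfl step2,
      Finset.sum_eq_single_of_mem k (Finset.mem_range.mpr hk)
        (fun l hl hlk => by rw [hgeom l hl hlk]; ring),
      hgeom1, hNc]
    field_simp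
  -- the derivative part
  have hder0 : HasDerivAt H (∑ m ∈ S, (1 - ((|m| : ℤ) : ℂ) / (2 * j)) *
      ((1/(2*(j:ℂ))) * ∑ l ∈ Finset.range N,
        (v l : ℂ) * Complex.exp (-((m : ℂ) * (Real.pi * l / j)) * Complex.I)) *
      ((m:ℂ) * Complex.I * Complex.exp ((m : ℂ) * (ξ:ℝ) * Complex.I))) ξ := by
    apply HasDerivAt.congr_of_eventuallyEq ?_ (Filter.Eventually.of_forall hH)
    apply HasDerivAt.fun_sum
    intro m _
    have h1 : HasDerivAt (fun zz : ℂ => (m:ℂ) * zz * Complex.I) ((m:ℂ)*Complex.I) ((ξ:ℝ):ℂ) := by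
      simpa using ((hasDerivAt_id (((ξ:ℝ)):ℂ)).const_mul ((m:ℂ))).mul_const Complex.I
    have h0 : HasDerivAt (fun zz : ℂ => Complex.exp ((m:ℂ) * zz * Complex.I))
        ((m:ℂ) * Complex.I * Complex.exp ((m:ℂ)*((ξ:ℝ):ℂ)*Complex.I)) ((ξ:ℝ):ℂ) := by
      have := (Complex.hasDerivAt_exp ((m:ℂ)*((ξ:ℝ):ℂ)*Complex.I)).comp ((ξ:ℝ):ℂ) h1
      simpa [Function.comp_def] using this.congr_deriv (by ring)
    exact (h0.comp_ofReal).const_mul _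
  have hzero : (∑ m ∈ S, (1 - ((|m| : ℤ) : ℂ) / (2 * j)) *
      ((1/(2*(j:ℂ))) * ∑ l ∈ Finset.range N,
        (v l : ℂ) * Complex.exp (-((m : ℂ) * (Real.pi * l / j)) * Complex.I)) *
      ((m:ℂ) * Complex.I * Complex.exp ((m : ℂ) * (ξ:ℝ) * Complex.I))) = 0 := by
    have step1 : ∀ m ∈ S, (1 - ((|m| : ℤ) : ℂ) / (2 * j)) *
        ((1/(2*(j:ℂ))) * ∑ l ∈ Finset.range N,
          (v l : ℂ) * Complex.exp (-((m : ℂ) * (Real.pi * l / j)) * Complex.I)) *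
        ((m:ℂ) * Complex.I * Complex.exp ((m : ℂ) * (ξ:ℝ) * Complex.I))
        = ((1/(2*(j:ℂ))) * ∑ l ∈ Finset.range N,
          (v l : ℂ) * Complex.exp (-((m : ℂ) * (Real.pi * l / j)) * Complex.I)) *
        (((1 - ((|m| : ℤ) : ℂ) / (2 * j)) * ((m:ℂ) * Complex.I)) *
          Complex.exp ((m : ℂ) * (ξ:ℝ) * Complex.I)) := by
      intro m _; ring
    rw [Finset.sum_congr rfl step1,
      swap (fun m => (1 - ((|m| : ℤ) : ℂ) / (2 * j)) * ((m:ℂ) * Complex.I))]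
    have inner2 : ∀ l : ℕ, ∑ m ∈ S,
        ((1 - ((|m| : ℤ) : ℂ) / (2 * j)) * ((m:ℂ) * Complex.I)) * (z ((k:ℤ)-l))^m = 0 := by
      intro l
      rw [hS]
      have hterm : ∀ m ∈ Finset.Icc (-(N:ℤ)+1) ((N:ℤ)-1),
          ((1 - ((|m| : ℤ) : ℂ) / (2 * j)) * ((m:ℂ) * Complex.I)) * (z ((k:ℤ)-l))^m
            = (Complex.I/((N:ℕ):ℂ)) * ((m:ℂ) * (((N:ℕ):ℂ) - ((|m| : ℤ) : ℂ)) * (z ((k:ℤ)-l))^m) := by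
        intro m _
        rw [hNc]
        field_simp
      rw [Finset.sum_congr rfl hterm, ← Finset.mul_sum, fejer_deriv_sum N hN _ (hroot l)]
      simp
    have step2 : ∀ l ∈ Finset.range N, (1 / (2 * (j : ℂ))) *
        ((v l : ℂ) * ∑ m ∈ S,
          ((1 - ((|m| : ℤ) : ℂ) / (2 * j)) * ((m:ℂ) * Complex.I)) * (z ((k:ℤ) - l)) ^ m)
        = 0 := by
      intro l _; rw [inner2 l]; ring
    rw [Finset.sum_congr rfl step2, Finset.sum_const_zero]
  exact ⟨hval, hzero ▸ hder0⟩
end
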